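/- arXiv:0912.0309 — 8 statements merged into one kernel-verified Lean document; each statement's English description precedes it below -/
import Mathlib

section
/- Let δ ≥ 1 and n ≥ 2δ + 3 be integers, let N ≥ n, and let π be a permutation of {1,…,N} such that for all i, j ∈ {1,…,n} with |i − j| ≤ δ + 1 one has |π(i) − π(j)| ≤ δ + 1. Then the image π({1,…,n}) is a set of n consecutive integers, i.e., max_{1 ≤ i ≤ n} π(i) − min_{1 ≤ i ≤ n} π(i) = n − 1. -/
/-- Let `δ ≥ 1` and `n ≥ 2δ + 3`, let `N ≥ n`, and let `π` be a
permutation (bijection onto itself) of `{1,…,N}` such that any two elements of `{1,…,n}`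
differing by at most `δ + 1` are sent to values differing by at most `δ + 1`.  Then the
image `π({1,…,n})` is a set of `n` consecutive integers, i.e.
`max_{1 ≤ i ≤ n} π(i) − min_{1 ≤ i ≤ n} π(i) = n − 1`. -/
theorem image_consecutive (δ n N : ℕ) (hδ : 1 ≤ δ) (hn : 2 * δ + 3 ≤ n) (hN : n ≤ N)
    (π : ℕ → ℕ) (hπ : Set.BijOn π (Set.Icc 1 N) (Set.Icc 1 N))
    (hyp : ∀ i ∈ Set.Icc 1 n, ∀ j ∈ Set.Icc 1 n,
      |(i : ℤ) - (j : ℤ)| ≤ (δ : ℤ) + 1 → |(π i : ℤ) - (π j : ℤ)| ≤ (δ : ℤ) + 1) :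
    ((Finset.Icc 1 n).image π).max'
        (Finset.Nonempty.image (Finset.nonempty_Icc.mpr (by omega)) π) -
      ((Finset.Icc 1 n).image π).min'
        (Finset.Nonempty.image (Finset.nonempty_Icc.mpr (by omega)) π) = n - 1 := by
  have hinj : Set.InjOn π (Set.Icc 1 n) :=
    hπ.injOn.mono (Set.Icc_subset_Icc_right hN)
  set T : Finset ℕ := (Finset.Icc 1 n).image π with hT
  have hne : T.Nonempty :=
    Finset.Nonempty.image (Finset.nonempty_Icc.mpr (by omega)) π
  have hcard : T.card = n := by
    rw [hT, Finset.card_image_of_injOn (by rw [Finset.coe_Icc]; exact hinj),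
      Nat.card_Icc]
    omega
  -- block lemma
  have block : ∀ i w, 1 ≤ i → i + δ + 1 ≤ n → w ∉ T →
      (∀ j ∈ Finset.Icc i (i + δ + 1), π j < w) ∨
      (∀ j ∈ Finset.Icc i (i + δ + 1), w < π j) := by
    intro i w h1 h2 hw
    have hsub : Finset.Icc i (i + δ + 1) ⊆ Finset.Icc 1 n :=
      Finset.Icc_subset_Icc (by omega) (by omega)
    set Q : Finset ℕ := (Finset.Icc i (i + δ + 1)).image π with hQ
    have hQsub : Q ⊆ T := Finset.image_subset_image hsub
    have hQcard : Q.card = δ + 2 := by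
      rw [hQ, Finset.card_image_of_injOn, Nat.card_Icc]
      · omega
      · rw [Finset.coe_Icc]
        exact hinj.mono (Set.Icc_subset_Icc (by omega) (by omega))
    have hQne : Q.Nonempty := by
      rw [← Finset.card_pos, hQcard]; omega
    set c := Q.min' hQne with hc
    obtain ⟨j0, hj0, hj0e⟩ := Finset.mem_image.mp (Q.min'_mem hQne)
    have hQI : Q ⊆ Finset.Icc c (c + (δ + 1)) := by
      intro q hq
      obtain ⟨j, hj, hje⟩ := Finset.mem_image.mp hq
      have hmin : c ≤ q := Q.min'_le q hq
      have hj' := hsub hj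
      have hj0' := hsub hj0
      rw [Finset.mem_Icc] at hj hj0 hj' hj0'
      have habs := hyp j (Set.mem_Icc.mpr ⟨hj'.1, hj'.2⟩)
        j0 (Set.mem_Icc.mpr ⟨hj0'.1, hj0'.2⟩)
        (by rw [abs_le]; constructor <;> push_cast <;> omega)
      rw [abs_le] at habs
      rw [Finset.mem_Icc]
      rw [← hc] at hj0e
      omega
    have hQeq : Q = Finset.Icc c (c + (δ + 1)) :=
      Finset.eq_of_subset_of_card_le hQI (by rw [Nat.card_Icc]; omega)
    have hwQ : w ∉ Q := fun h => hw (hQsub h)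
    rw [hQeq, Finset.mem_Icc] at hwQ
    push_neg at hwQ
    by_cases hcase : w < c
    · right
      intro j hj
      have : π j ∈ Q := Finset.mem_image_of_mem π hj
      rw [hQeq, Finset.mem_Icc] at this
      omega
    · left
      intro j hj
      have : π j ∈ Q := Finset.mem_image_of_mem π hj
      rw [hQeq, Finset.mem_Icc] at this
      have := hwQ (by omega)
      omega
  set m := T.min' hne with hm
  set Mx := T.max' hne with hMx
  have hmM : m ≤ Mx := T.min'_le _ (T.max'_mem hne)
  have hfull : Finset.Icc m Mx ⊆ T := by
    intro w hw
    rw [Finset.mem_Icc] at hw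
    by_contra hwT
    obtain ⟨a, ha, hπa⟩ := Finset.mem_image.mp (T.min'_mem hne)
    obtain ⟨b, hb, hπb⟩ := Finset.mem_image.mp (T.max'_mem hne)
    rw [Finset.mem_Icc] at ha hb
    have hmw : m < w := lt_of_le_of_ne hw.1 (fun h => hwT (h ▸ T.min'_mem hne))
    have hwM : w < Mx := lt_of_le_of_ne hw.2 (fun h => hwT (h ▸ T.max'_mem hne))
    set L : ℕ → Prop := fun i => ∀ j ∈ Finset.Icc i (i + δ + 1), π j < w with hL
    have dich : ∀ i, 1 ≤ i → i ≤ n - δ - 1 →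
        L i ∨ (∀ j ∈ Finset.Icc i (i + δ + 1), w < π j) := by
      intro i h1 h2
      exact block i w h1 (by omega) hwT
    have step : ∀ i, 1 ≤ i → i + 1 ≤ n - δ - 1 → (L i ↔ L (i + 1)) := by
      intro i h1 h2
      constructor
      · intro hLi
        rcases dich (i + 1) (by omega) h2 with h | h
        · exact h
        · exfalso
          have h1' := hLi (i + 1) (Finset.mem_Icc.mpr (by omega))
          have h2' := h (i + 1) (Finset.mem_Icc.mpr (by omega))
          omega
      · intro hLi
        rcases dich i h1 (by omega) with h | h
        · exact h
        · exfalso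
          have h1' := hLi (i + 1) (Finset.mem_Icc.mpr (by omega))
          have h2' := h (i + 1) (Finset.mem_Icc.mpr (by omega))
          omega
    have key : ∀ i, 1 ≤ i → i ≤ n - δ - 1 → (L i ↔ L 1) := by
      intro i
      induction i with
      | zero => intro h; omega
      | succ k ih =>
        intro h1 h2
        rcases Nat.eq_or_lt_of_le h1 with h | h
        · rw [← h]
        · have hk : 1 ≤ k := by omega
          exact ((step k hk (by omega)).symm).trans (ih hk (by omega))
    have hset : ∀ x, 1 ≤ x → x ≤ n →
        (1 ≤ min x (n - δ - 1) ∧ min x (n - δ - 1) ≤ n - δ - 1 ∧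
         min x (n - δ - 1) ≤ x ∧ x ≤ min x (n - δ - 1) + δ + 1) := by
      intro x hx1 hx2
      omega
    obtain ⟨ha1, ha2, ha3, ha4⟩ := hset a ha.1 ha.2
    obtain ⟨hb1, hb2, hb3, hb4⟩ := hset b hb.1 hb.2
    have hLa : L (min a (n - δ - 1)) := by
      rcases dich _ ha1 ha2 with h | h
      · exact h
      · exfalso
        have := h a (Finset.mem_Icc.mpr ⟨ha3, ha4⟩)
        omega
    have hLb : ¬ L (min b (n - δ - 1)) := by
      intro hLb
      have := hLb b (Finset.mem_Icc.mpr ⟨hb3, hb4⟩)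
      omega
    exact hLb ((key _ hb1 hb2).mpr ((key _ ha1 ha2).mp hLa))
  have hTsub : T ⊆ Finset.Icc m Mx := by
    intro x hx
    exact Finset.mem_Icc.mpr ⟨T.min'_le x hx, T.le_max' x hx⟩
  have hTeq : T = Finset.Icc m Mx := Finset.Subset.antisymm hTsub hfull
  have hcard2 : n = Mx + 1 - m := by
    rw [← hcard, hTeq, Nat.card_Icc]
  show Mx - m = n - 1
  omega
end

section
/- Let δ ≥ 1 and n ≥ 2δ + 3 be integers, and let σ be a permutation of {1,…,n} such that for all i, j ∈ {1,…,n} with |i − j| ≤ δ + 1 one has |σ(i) − σ(j)| ≤ δ + 1. Then {σ(1), σ(n)} = {1, n}. -/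
/-- Counting lemma: an interior point cannot map to `1` or `n`. -/
lemma interior_not_endpoint (δ n : ℕ) (hn : 2 * δ + 3 ≤ n)
    (σ : ℕ → ℕ) (hσ : Set.BijOn σ (Set.Icc 1 n) (Set.Icc 1 n))
    (hyp : ∀ i ∈ Set.Icc 1 n, ∀ j ∈ Set.Icc 1 n,
      |(i : ℤ) - (j : ℤ)| ≤ (δ : ℤ) + 1 → |(σ i : ℤ) - (σ j : ℤ)| ≤ (δ : ℤ) + 1)
    (p : ℕ) (h1 : 1 < p) (h2 : p < n) : σ p ≠ 1 ∧ σ p ≠ n := by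
  have hpmem : p ∈ Set.Icc 1 n := ⟨by omega, le_of_lt h2⟩
  have hv : σ p ∈ Set.Icc 1 n := hσ.mapsTo hpmem
  set v := σ p with hvdef
  set J : Finset ℕ := Finset.Icc (max 1 (p - (δ + 1))) (min n (p + (δ + 1))) with hJ
  set W : Finset ℕ := Finset.Icc (max 1 (v - (δ + 1))) (min n (v + (δ + 1))) with hW
  have hJmem : ∀ j ∈ J, j ∈ Set.Icc 1 n := by
    intro j hj
    rw [hJ, Finset.mem_Icc] at hj
    exact ⟨by omega, by omega⟩
  have hmaps : ∀ j ∈ J, σ j ∈ W := by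
    intro j hj
    have hjn := hJmem j hj
    rw [hJ, Finset.mem_Icc] at hj
    have hdist : |(j : ℤ) - (p : ℤ)| ≤ (δ : ℤ) + 1 := by
      rw [abs_le]
      constructor <;> omega
    have := hyp j hjn p hpmem hdist
    rw [abs_le] at this
    have hσj : σ j ∈ Set.Icc 1 n := hσ.mapsTo hjn
    obtain ⟨hσj1, hσj2⟩ := hσj
    rw [hW, Finset.mem_Icc]
    constructor <;> omega
  have hinj : Set.InjOn σ J := fun a ha b hb hab =>
    hσ.injOn (hJmem a ha) (hJmem b hb) hab
  have hcard : J.card ≤ W.card := Finset.card_le_card_of_injOn σ hmaps hinj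
  rw [hJ, hW, Nat.card_Icc, Nat.card_Icc] at hcard
  obtain ⟨hv1, hv2⟩ := hv
  constructor <;> intro h <;> rw [h] at hcard <;> omega

/-- Let `δ ≥ 1` and `n ≥ 2δ + 3`, and let `σ` be a permutation
(bijection onto itself) of `{1,…,n}` such that any two elements of `{1,…,n}` differing
by at most `δ + 1` are sent to values differing by at most `δ + 1`.
Then `{σ(1), σ(n)} = {1, n}`. -/
theorem endpoints_fixed (δ n : ℕ) (hδ : 1 ≤ δ) (hn : 2 * δ + 3 ≤ n)
    (σ : ℕ → ℕ) (hσ : Set.BijOn σ (Set.Icc 1 n) (Set.Icc 1 n))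
    (hyp : ∀ i ∈ Set.Icc 1 n, ∀ j ∈ Set.Icc 1 n,
      |(i : ℤ) - (j : ℤ)| ≤ (δ : ℤ) + 1 → |(σ i : ℤ) - (σ j : ℤ)| ≤ (δ : ℤ) + 1) :
    ({σ 1, σ n} : Set ℕ) = {1, n} := by
  have h1n : (1 : ℕ) ∈ Set.Icc 1 n := ⟨le_refl 1, by omega⟩
  have hnn : n ∈ Set.Icc 1 n := ⟨by omega, le_refl n⟩
  obtain ⟨p, hp, hp1⟩ := hσ.surjOn h1n
  obtain ⟨q, hq, hqn⟩ := hσ.surjOn hnn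
  have hpend : p = 1 ∨ p = n := by
    by_contra hc
    push_neg at hc
    obtain ⟨hne1, hnen⟩ := hc
    obtain ⟨hp1', hp2'⟩ := hp
    have := (interior_not_endpoint δ n hn σ hσ hyp p (by omega) (by omega)).1
    exact this hp1
  have hqend : q = 1 ∨ q = n := by
    by_contra hc
    push_neg at hc
    obtain ⟨hne1, hnen⟩ := hc
    obtain ⟨hq1', hq2'⟩ := hq
    have := (interior_not_endpoint δ n hn σ hσ hyp q (by omega) (by omega)).2
    exact this hqn
  have hpq : p ≠ q := by
    intro h
    rw [h, hqn] at hp1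
    omega
  rcases hpend with hp' | hp' <;> rcases hqend with hq' | hq'
  · exact absurd (hp'.trans hq'.symm) hpq
  · rw [hp'] at hp1; rw [hq'] at hqn; rw [hp1, hqn]
  · rw [hp'] at hp1; rw [hq'] at hqn; rw [hp1, hqn]; exact Set.pair_comm n 1
  · exact absurd (hp'.trans hq'.symm) hpq
end

section
/- Let δ ≥ 1 and n ≥ 2δ + 3 be integers, and let σ be a permutation of {1,…,n} such that for all i, j ∈ {1,…,n} with |i − j| ≤ δ + 1 one has |σ(i) − σ(j)| ≤ δ + 1. Then either σ(i) = i for every i ∈ {1,…,δ+1} ∪ {n−δ,…,n}, or σ(i) = n + 1 − i for every i ∈ {1,…,δ+1} ∪ {n−δ,…,n}. -/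
private lemma rev_image (n a b : ℕ) (ha : 1 ≤ a) (hb : b ≤ n) :
    Finset.image (fun v => n + 1 - v) (Finset.Icc a b) = Finset.Icc (n + 1 - b) (n + 1 - a) := by
  ext x
  simp only [Finset.mem_image, Finset.mem_Icc]
  constructor
  · rintro ⟨v, ⟨h1, h2⟩, rfl⟩; omega
  · rintro ⟨h1, h2⟩; exact ⟨n + 1 - x, ⟨by omega, by omega⟩, by omega⟩

private lemma window_image (δ n : ℕ) (σ : ℕ → ℕ)
    (hσ : Set.BijOn σ (Set.Icc 1 n) (Set.Icc 1 n))
    (hyp : ∀ i ∈ Set.Icc 1 n, ∀ j ∈ Set.Icc 1 n,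
      |(i : ℤ) - (j : ℤ)| ≤ (δ : ℤ) + 1 → |(σ i : ℤ) - (σ j : ℤ)| ≤ (δ : ℤ) + 1)
    (k : ℕ) (hk : 1 ≤ k) (hkn : k + (δ + 1) ≤ n) :
    ∃ a, 1 ≤ a ∧ a + (δ + 1) ≤ n ∧
      Finset.image σ (Finset.Icc k (k + (δ + 1))) = Finset.Icc a (a + (δ + 1)) := by
  set W := Finset.Icc k (k + (δ + 1)) with hW
  have hWsub : (W : Set ℕ) ⊆ Set.Icc 1 n := by
    rw [hW, Finset.coe_Icc]; exact Set.Icc_subset_Icc (by omega) (by omega)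
  have hWne : (Finset.image σ W).Nonempty :=
    ⟨σ k, Finset.mem_image_of_mem σ (by simp [hW])⟩
  set a := (Finset.image σ W).min' hWne with hadef
  have hamem : a ∈ Finset.image σ W := Finset.min'_mem _ _
  obtain ⟨i0, hi0, hi0a⟩ := Finset.mem_image.mp hamem
  have hclose : ∀ x ∈ Finset.image σ W, x ≤ a + (δ + 1) := by
    intro x hx
    obtain ⟨i1, hi1, hi1x⟩ := Finset.mem_image.mp hx
    have h0 := Finset.mem_Icc.mp hi0
    have h1 := Finset.mem_Icc.mp hi1
    have hd := hyp i0 (hWsub hi0) i1 (hWsub hi1)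
      (by rw [abs_le]; constructor <;> push_cast <;> omega)
    rw [hi0a, hi1x, abs_le] at hd
    omega
  have hsub : Finset.image σ W ⊆ Finset.Icc a (a + (δ + 1)) := by
    intro x hx
    exact Finset.mem_Icc.mpr ⟨Finset.min'_le _ _ hx, hclose x hx⟩
  have hcard : (Finset.image σ W).card = δ + 2 := by
    rw [Finset.card_image_of_injOn (hσ.injOn.mono hWsub), hW, Nat.card_Icc]
    omega
  have heq : Finset.image σ W = Finset.Icc a (a + (δ + 1)) := by
    apply Finset.eq_of_subset_of_card_le hsub
    rw [hcard, Nat.card_Icc]; omega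
  have ha1 : 1 ≤ a := by
    have := hσ.mapsTo (hWsub hi0)
    rw [Set.mem_Icc] at this; omega
  have ha2 : a + (δ + 1) ≤ n := by
    have hmem : a + (δ + 1) ∈ Finset.image σ W := by
      rw [heq]; exact Finset.mem_Icc.mpr ⟨by omega, le_refl _⟩
    obtain ⟨i2, hi2, hi2e⟩ := Finset.mem_image.mp hmem
    have := hσ.mapsTo (hWsub hi2)
    rw [Set.mem_Icc] at this; omega
  exact ⟨a, ha1, ha2, heq⟩

private lemma fix_all (δ n : ℕ) (hδ : 1 ≤ δ) (hn : 2 * δ + 3 ≤ n) (σ : ℕ → ℕ)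
    (hσ : Set.BijOn σ (Set.Icc 1 n) (Set.Icc 1 n))
    (hyp : ∀ i ∈ Set.Icc 1 n, ∀ j ∈ Set.Icc 1 n,
      |(i : ℤ) - (j : ℤ)| ≤ (δ : ℤ) + 1 → |(σ i : ℤ) - (σ j : ℤ)| ≤ (δ : ℤ) + 1)
    (hw : ∀ k, 1 ≤ k → k + (δ + 1) ≤ n →
      Finset.image σ (Finset.Icc k (k + (δ + 1))) = Finset.Icc k (k + (δ + 1))) :
    ∀ i, 1 ≤ i → i ≤ n → σ i = i := by
  -- Step 1 : initial segments are invariant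
  have step1 : ∀ j, δ + 2 ≤ j → j ≤ n →
      Finset.image σ (Finset.Icc 1 j) = Finset.Icc 1 j := by
    intro j hj1 hj2
    induction j, hj1 using Nat.le_induction with
    | base =>
      have := hw 1 le_rfl (by omega)
      have e : 1 + (δ + 1) = δ + 2 := by omega
      rwa [e] at this
    | succ j hj ih =>
      have hsplit : Finset.Icc 1 (j + 1) = Finset.Icc 1 j ∪ Finset.Icc (j - δ) (j + 1) := by
        ext x; simp only [Finset.mem_union, Finset.mem_Icc]; omega
      have hwin := hw (j - δ) (by omega) (by omega)
      have e : (j - δ) + (δ + 1) = j + 1 := by omega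
      rw [e] at hwin
      rw [hsplit, Finset.image_union, ih (by omega), hwin, ← hsplit]
  -- Step 2 : σ fixes everything ≥ δ+3
  have step2 : ∀ j, δ + 3 ≤ j → j ≤ n → σ j = j := by
    intro j hj1 hj2
    have hmem : σ j ∈ Finset.Icc 1 j := by
      rw [← step1 j (by omega) hj2]
      exact Finset.mem_image_of_mem σ (Finset.mem_Icc.mpr ⟨by omega, le_rfl⟩)
    rw [Finset.mem_Icc] at hmem
    by_contra hne
    have hlt : σ j ≤ j - 1 := by omega
    have hmem2 : σ j ∈ Finset.Icc 1 (j - 1) := Finset.mem_Icc.mpr ⟨by omega, hlt⟩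
    rw [← step1 (j - 1) (by omega) (by omega)] at hmem2
    obtain ⟨i, hi, hie⟩ := Finset.mem_image.mp hmem2
    rw [Finset.mem_Icc] at hi
    have : i = j := hσ.injOn (Set.mem_Icc.mpr ⟨hi.1, by omega⟩)
      (Set.mem_Icc.mpr ⟨by omega, hj2⟩) hie
    omega
  -- Step 3 : σ fixes 1..δ+2 by strong induction
  have step3 : ∀ t, 1 ≤ t → t ≤ δ + 2 → σ t = t := by
    intro t
    induction t using Nat.strong_induction_on with
    | _ t ih =>
      intro ht1 ht2
      have hmem : t ∈ Finset.Icc 1 (δ + 2) := Finset.mem_Icc.mpr ⟨ht1, ht2⟩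
      have hwin := hw 1 le_rfl (by omega)
      have e : 1 + (δ + 1) = δ + 2 := by omega
      rw [e] at hwin
      rw [← hwin] at hmem
      obtain ⟨i, hi, hie⟩ := Finset.mem_image.mp hmem
      rw [Finset.mem_Icc] at hi
      rcases lt_trichotomy i t with h | h | h
      · have := ih i h hi.1 (by omega)
        omega
      · rw [← h]; exact hie.trans h.symm
      · -- i > t, so t ≤ δ+1; use j = δ+2+t
        exfalso
        have htle : t ≤ δ + 1 := by omega
        have hj : σ (δ + 2 + t) = δ + 2 + t := step2 (δ + 2 + t) (by omega) (by omega)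
        have hd := hyp i (Set.mem_Icc.mpr ⟨hi.1, by omega⟩)
          (δ + 2 + t) (Set.mem_Icc.mpr ⟨by omega, by omega⟩)
          (by rw [abs_le]; constructor <;> push_cast <;> omega)
        rw [hie, hj, abs_le] at hd
        push_cast at hd
        omega
  intro i hi1 hi2
  rcases le_or_gt i (δ + 2) with h | h
  · exact step3 i hi1 h
  · exact step2 i (by omega) hi2

/-- Let `δ ≥ 1` and `n ≥ 2δ + 3`, and let `σ` be a permutation
(bijection onto itself) of `{1,…,n}` such that any two elements of `{1,…,n}` differing
by at most `δ + 1` are sent to values differing by at most `δ + 1`.  Then either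
`σ(i) = i` for every `i ∈ {1,…,δ+1} ∪ {n−δ,…,n}`, or `σ(i) = n + 1 − i` for every
`i ∈ {1,…,δ+1} ∪ {n−δ,…,n}`. -/
theorem border_fixed_or_reversed (δ n : ℕ) (hδ : 1 ≤ δ) (hn : 2 * δ + 3 ≤ n)
    (σ : ℕ → ℕ) (hσ : Set.BijOn σ (Set.Icc 1 n) (Set.Icc 1 n))
    (hyp : ∀ i ∈ Set.Icc 1 n, ∀ j ∈ Set.Icc 1 n,
      |(i : ℤ) - (j : ℤ)| ≤ (δ : ℤ) + 1 → |(σ i : ℤ) - (σ j : ℤ)| ≤ (δ : ℤ) + 1) :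
    (∀ i ∈ Set.Icc 1 (δ + 1) ∪ Set.Icc (n - δ) n, σ i = i) ∨
    (∀ i ∈ Set.Icc 1 (δ + 1) ∪ Set.Icc (n - δ) n, σ i = n + 1 - i) := by
  have Hex : ∀ k, ∃ a, 1 ≤ k → k + (δ + 1) ≤ n →
      (1 ≤ a ∧ a + (δ + 1) ≤ n ∧
        Finset.image σ (Finset.Icc k (k + (δ + 1))) = Finset.Icc a (a + (δ + 1))) := by
    intro k
    by_cases h1 : 1 ≤ k ∧ k + (δ + 1) ≤ n
    · obtain ⟨a, ha⟩ := window_image δ n σ hσ hyp k h1.1 h1.2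
      exact ⟨a, fun _ _ => ha⟩
    · exact ⟨0, fun h2 h3 => absurd ⟨h2, h3⟩ h1⟩
  choose m hm using Hex
  -- injectivity of k ↦ m k on valid indices
  have inj : ∀ k l, 1 ≤ k → l + (δ + 1) ≤ n → k < l → m k ≠ m l := by
    intro k l hk hl hkl heq
    obtain ⟨_, _, hIk⟩ := hm k hk (by omega)
    obtain ⟨_, _, hIl⟩ := hm l (by omega) hl
    have hmem : σ k ∈ Finset.Icc (m l) (m l + (δ + 1)) := by
      rw [← heq, ← hIk]
      exact Finset.mem_image_of_mem σ (Finset.mem_Icc.mpr ⟨le_rfl, by omega⟩)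
    rw [← hIl] at hmem
    obtain ⟨i, hi, hie⟩ := Finset.mem_image.mp hmem
    rw [Finset.mem_Icc] at hi
    have : i = k := hσ.injOn (Set.mem_Icc.mpr ⟨by omega, by omega⟩)
      (Set.mem_Icc.mpr ⟨by omega, by omega⟩) hie
    omega
  -- consecutive steps are ±1
  have step : ∀ k, 1 ≤ k → (k + 1) + (δ + 1) ≤ n →
      m (k + 1) = m k + 1 ∨ m k = m (k + 1) + 1 := by
    intro k hk hkn
    obtain ⟨ha1, ha2, hIk⟩ := hm k hk (by omega)
    obtain ⟨hb1, hb2, hIl⟩ := hm (k + 1) (by omega) hkn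
    have hne : m k ≠ m (k + 1) := inj k (k + 1) hk hkn (by omega)
    have hAsub : (Finset.Icc (k + 1) (k + (δ + 1)) : Finset ℕ) ⊆ Finset.Icc k (k + (δ + 1)) :=
      Finset.Icc_subset_Icc (by omega) le_rfl
    have hAsub' : (Finset.Icc (k + 1) (k + (δ + 1)) : Finset ℕ) ⊆
        Finset.Icc (k + 1) ((k + 1) + (δ + 1)) := Finset.Icc_subset_Icc le_rfl (by omega)
    have hsub1 : Finset.image σ (Finset.Icc (k + 1) (k + (δ + 1))) ⊆
        Finset.Icc (m k) (m k + (δ + 1)) := by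
      rw [← hIk]; exact Finset.image_subset_image hAsub
    have hsub2 : Finset.image σ (Finset.Icc (k + 1) (k + (δ + 1))) ⊆
        Finset.Icc (m (k + 1)) (m (k + 1) + (δ + 1)) := by
      rw [← hIl]; exact Finset.image_subset_image hAsub'
    have hcard : (Finset.image σ (Finset.Icc (k + 1) (k + (δ + 1)))).card = δ + 1 := by
      rw [Finset.card_image_of_injOn, Nat.card_Icc]
      · omega
      · apply hσ.injOn.mono
        rw [Finset.coe_Icc]
        exact Set.Icc_subset_Icc (by omega) (by omega)
    rcases le_or_gt (m k) (m (k + 1)) with h | h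
    · -- intersection is Icc (m (k+1)) (m k + (δ+1))
      have hsub : Finset.image σ (Finset.Icc (k + 1) (k + (δ + 1))) ⊆
          Finset.Icc (m (k + 1)) (m k + (δ + 1)) := by
        intro x hx
        have h1 := Finset.mem_Icc.mp (hsub1 hx)
        have h2 := Finset.mem_Icc.mp (hsub2 hx)
        exact Finset.mem_Icc.mpr ⟨h2.1, h1.2⟩
      have hle := Finset.card_le_card hsub
      rw [hcard, Nat.card_Icc] at hle
      omega
    · have hsub : Finset.image σ (Finset.Icc (k + 1) (k + (δ + 1))) ⊆
          Finset.Icc (m k) (m (k + 1) + (δ + 1)) := by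
        intro x hx
        have h1 := Finset.mem_Icc.mp (hsub1 hx)
        have h2 := Finset.mem_Icc.mp (hsub2 hx)
        exact Finset.mem_Icc.mpr ⟨h1.1, h2.2⟩
      have hle := Finset.card_le_card hsub
      rw [hcard, Nat.card_Icc] at hle
      omega
  -- dichotomy at the start
  have hstart := step 1 le_rfl (by omega)
  norm_num at hstart
  rcases hstart with hinc | hdec
  · -- increasing case : m k = k for all valid k, hence σ = id
    left
    have claim : ∀ j, (j + 2) + (δ + 1) ≤ n →
        m (j + 1) = m 1 + j ∧ m (j + 2) = m 1 + (j + 1) := by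
      intro j
      induction j with
      | zero =>
        intro _
        norm_num
        omega
      | succ j ih =>
        intro hjn
        obtain ⟨h1, h2⟩ := ih (by omega)
        have e1 : j + 1 + 1 = j + 2 := by omega
        have e2 : j + 1 + 2 = j + 3 := by omega
        have e3 : j + 2 + 1 = j + 3 := by omega
        rw [e1, e2]
        refine ⟨h2.trans (by omega), ?_⟩
        have hs := step (j + 2) (by omega) (by omega)
        rw [e3] at hs
        rcases hs with h | h
        · omega
        · exfalso
          exact inj (j + 1) (j + 3) (by omega) (by omega) (by omega) (by omega)
    have hmval : ∀ k, 1 ≤ k → k + (δ + 1) ≤ n → m k = m 1 + (k - 1) := by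
      intro k hk hkn
      rcases Nat.lt_or_ge k 2 with h | h
      · interval_cases k
        omega
      · have hc := (claim (k - 2) (by omega)).2
        have e : k - 2 + 2 = k := by omega
        rw [e] at hc
        omega
    -- endpoint : m 1 = 1
    have hm1 : m 1 = 1 := by
      have h1 := hmval (n - (δ + 1)) (by omega) (by omega)
      obtain ⟨ha1, ha2, _⟩ := hm (n - (δ + 1)) (by omega) (by omega)
      obtain ⟨hb1, _, _⟩ := hm 1 le_rfl (by omega)
      omega
    have hw : ∀ k, 1 ≤ k → k + (δ + 1) ≤ n →
        Finset.image σ (Finset.Icc k (k + (δ + 1))) = Finset.Icc k (k + (δ + 1)) := by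
      intro k hk hkn
      obtain ⟨_, _, hI⟩ := hm k hk hkn
      have := hmval k hk hkn
      rw [hI]
      congr 1 <;> omega
    have hfix := fix_all δ n hδ hn σ hσ hyp hw
    intro i hi
    rcases hi with hi | hi <;> rw [Set.mem_Icc] at hi <;> exact hfix i (by omega) (by omega)
  · -- decreasing case
    right
    have claim : ∀ j, (j + 2) + (δ + 1) ≤ n →
        m (j + 1) + j = m 1 ∧ m (j + 2) + (j + 1) = m 1 := by
      intro j
      induction j with
      | zero =>
        intro _
        norm_num
        omega
      | succ j ih =>
        intro hjn
        obtain ⟨h1, h2⟩ := ih (by omega)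
        have e1 : j + 1 + 1 = j + 2 := by omega
        have e2 : j + 1 + 2 = j + 3 := by omega
        have e3 : j + 2 + 1 = j + 3 := by omega
        rw [e1, e2]
        refine ⟨by omega, ?_⟩
        have hs := step (j + 2) (by omega) (by omega)
        rw [e3] at hs
        rcases hs with h | h
        · exfalso
          exact inj (j + 1) (j + 3) (by omega) (by omega) (by omega) (by omega)
        · omega
    have hmval : ∀ k, 1 ≤ k → k + (δ + 1) ≤ n → m k + (k - 1) = m 1 := by
      intro k hk hkn
      rcases Nat.lt_or_ge k 2 with h | h
      · interval_cases k
        omega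
      · have hc := (claim (k - 2) (by omega)).2
        have e : k - 2 + 2 = k := by omega
        rw [e] at hc
        omega
    have hm1 : m 1 = n - (δ + 1) := by
      have h1 := hmval (n - (δ + 1)) (by omega) (by omega)
      obtain ⟨ha1, _, _⟩ := hm (n - (δ + 1)) (by omega) (by omega)
      obtain ⟨_, hb2, _⟩ := hm 1 le_rfl (by omega)
      omega
    -- consider τ = (n+1-·) ∘ σ : its windows are fixed
    set τ : ℕ → ℕ := fun i => n + 1 - σ i with hτ
    have hrbij : Set.BijOn (fun v => n + 1 - v) (Set.Icc 1 n) (Set.Icc 1 n) := by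
      refine ⟨fun v hv => ?_, fun v hv w hw hvw => ?_, fun y hy => ?_⟩
      · simp only [Set.mem_Icc] at *
        omega
      · simp only [Set.mem_Icc] at hv hw
        simp only at hvw
        omega
      · simp only [Set.mem_Icc] at hy
        refine ⟨n + 1 - y, Set.mem_Icc.mpr ⟨by omega, by omega⟩, ?_⟩
        simp only
        omega
    have hτbij : Set.BijOn τ (Set.Icc 1 n) (Set.Icc 1 n) := hrbij.comp hσ
    have hτhyp : ∀ i ∈ Set.Icc 1 n, ∀ j ∈ Set.Icc 1 n,
        |(i : ℤ) - (j : ℤ)| ≤ (δ : ℤ) + 1 → |(τ i : ℤ) - (τ j : ℤ)| ≤ (δ : ℤ) + 1 := by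
      intro i hi j hj hd
      have h1 := hσ.mapsTo hi
      have h2 := hσ.mapsTo hj
      rw [Set.mem_Icc] at h1 h2
      have hc := hyp i hi j hj hd
      rw [abs_le] at hc ⊢
      have e1 : ((n + 1 - σ i : ℕ) : ℤ) = (n : ℤ) + 1 - σ i := by omega
      have e2 : ((n + 1 - σ j : ℕ) : ℤ) = (n : ℤ) + 1 - σ j := by omega
      constructor <;> simp only [hτ] <;> rw [e1, e2] <;> omega
    have hτw : ∀ k, 1 ≤ k → k + (δ + 1) ≤ n →
        Finset.image τ (Finset.Icc k (k + (δ + 1))) = Finset.Icc k (k + (δ + 1)) := by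
      intro k hk hkn
      obtain ⟨ha1, ha2, hI⟩ := hm k hk hkn
      have hmk : m k + (k - 1) = m 1 := hmval k hk hkn
      have hτcomp : Finset.image τ (Finset.Icc k (k + (δ + 1))) =
          Finset.image (fun v => n + 1 - v) (Finset.image σ (Finset.Icc k (k + (δ + 1)))) := by
        rw [Finset.image_image]
        rfl
      rw [hτcomp, hI, rev_image n (m k) (m k + (δ + 1)) ha1 ha2]
      congr 1 <;> omega
    have hfix := fix_all δ n hδ hn τ hτbij hτhyp hτw
    intro i hi
    have hib : 1 ≤ i ∧ i ≤ n := by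
      rcases hi with hi | hi <;> rw [Set.mem_Icc] at hi <;> omega
    have hfi := hfix i hib.1 hib.2
    have hσi := hσ.mapsTo (Set.mem_Icc.mpr hib)
    rw [Set.mem_Icc] at hσi
    simp only [hτ] at hfi
    omega
end

section
/- Let δ ≥ 1 and n ≥ 2δ + 3 be integers, and let σ be a permutation of {1,…,n} such that for all i, j ∈ {1,…,n} with |i − j| ≤ δ + 1 one has |σ(i) − σ(j)| ≤ δ + 1. Then either σ(i) = i for all i ∈ {1,…,n}, or σ(i) = n + 1 − i for all i ∈ {1,…,n}. -/
private theorem aux_idrev (d N : ℕ) (hd : 2 ≤ d) (hN : d + 1 ≤ N)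
    (σ : ℕ → ℕ) (hσ : Set.BijOn σ (Set.Icc 1 (N + d)) (Set.Icc 1 (N + d)))
    (key : ∀ p q : ℕ, 1 ≤ p → q ≤ N + d → p ≤ q → q ≤ p + d →
      σ p ≤ σ q + d ∧ σ q ≤ σ p + d) :
    (∀ i, 1 ≤ i → i ≤ N + d → σ i = i) ∨
    (∀ i, 1 ≤ i → i ≤ N + d → σ i + i = N + d + 1) := by
  classical
  have hinj : ∀ p q : ℕ, 1 ≤ p → p ≤ N + d → 1 ≤ q → q ≤ N + d → σ p = σ q → p = q :=
    fun p q h1 h2 h3 h4 h5 => hσ.injOn ⟨h1, h2⟩ ⟨h3, h4⟩ h5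
  have hmem : ∀ p : ℕ, 1 ≤ p → p ≤ N + d → 1 ≤ σ p ∧ σ p ≤ N + d := by
    intro p h1 h2
    have := hσ.mapsTo ⟨h1, h2⟩
    exact Set.mem_Icc.mp this
  set A : ℕ → Finset ℕ := fun i => (Finset.Icc i (i + d)).image σ with hAdef
  have hAne : ∀ i, (A i).Nonempty :=
    fun i => Finset.Nonempty.image (Finset.nonempty_Icc.mpr (by omega)) σ
  set a : ℕ → ℕ := fun i => (A i).min' (hAne i) with hadef
  have hAmem : ∀ i x, x ∈ A i → ∃ p, i ≤ p ∧ p ≤ i + d ∧ σ p = x := by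
    intro i x hx
    simp only [hAdef, Finset.mem_image, Finset.mem_Icc] at hx
    obtain ⟨p, ⟨h1, h2⟩, h3⟩ := hx
    exact ⟨p, h1, h2, h3⟩
  have hmemA : ∀ i p, i ≤ p → p ≤ i + d → σ p ∈ A i := by
    intro i p h1 h2
    simp only [hAdef, Finset.mem_image, Finset.mem_Icc]
    exact ⟨p, ⟨h1, h2⟩, rfl⟩
  have hcard : ∀ i, 1 ≤ i → i ≤ N → (A i).card = d + 1 := by
    intro i h1 h2
    have hsub : (↑(Finset.Icc i (i + d)) : Set ℕ) ⊆ Set.Icc 1 (N + d) := by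
      rw [Finset.coe_Icc]
      exact Set.Icc_subset_Icc (by omega) (by omega)
    rw [hAdef]
    rw [Finset.card_image_of_injOn (hσ.injOn.mono hsub), Nat.card_Icc]
    omega
  have hint : ∀ i, 1 ≤ i → i ≤ N → A i = Finset.Icc (a i) (a i + d) := by
    intro i h1 h2
    have hub : ∀ x ∈ A i, x ≤ a i + d := by
      intro x hx
      obtain ⟨p, hp1, hp2, hp3⟩ := hAmem i x hx
      have hm : a i ∈ A i := (A i).min'_mem (hAne i)
      obtain ⟨q, hq1, hq2, hq3⟩ := hAmem i (a i) hm
      rcases le_total p q with h | h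
      · have := key p q (by omega) (by omega) h (by omega)
        omega
      · have := key q p (by omega) (by omega) h (by omega)
        omega
    have hsub : A i ⊆ Finset.Icc (a i) (a i + d) :=
      fun x hx => Finset.mem_Icc.mpr ⟨Finset.min'_le _ x hx, hub x hx⟩
    exact Finset.eq_of_subset_of_card_le hsub (by rw [hcard i h1 h2, Nat.card_Icc]; omega)
  have ha_lb : ∀ i, 1 ≤ i → i ≤ N → 1 ≤ a i ∧ a i + d ≤ N + d := by
    intro i h1 h2
    have h3 : a i ∈ A i := (A i).min'_mem (hAne i)
    have h4 : a i + d ∈ A i := by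
      rw [hint i h1 h2]
      simp only [Finset.mem_Icc]
      omega
    obtain ⟨p, hp1, hp2, hp3⟩ := hAmem i (a i) h3
    obtain ⟨q, hq1, hq2, hq3⟩ := hAmem i (a i + d) h4
    have := hmem p (by omega) (by omega)
    have := hmem q (by omega) (by omega)
    omega
  have hnot : ∀ j p, 1 ≤ j → j ≤ N → 1 ≤ p → p ≤ N + d → (p < j ∨ j + d < p) →
      σ p ∉ A j := by
    intro j p h1 h2 h3 h4 h5 hcon
    obtain ⟨q, hq1, hq2, hq3⟩ := hAmem j _ hcon
    have := hinj q p (by omega) (by omega) (by omega) (by omega) hq3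
    omega
  have hstep : ∀ i, 1 ≤ i → i + 1 ≤ N → a (i + 1) = a i + 1 ∨ a i = a (i + 1) + 1 := by
    intro i h1 h2
    have hne : a (i + 1) ≠ a i := by
      intro he
      have h3 : σ i ∈ A i := hmemA i i le_rfl (by omega)
      have h4 : σ i ∉ A (i + 1) :=
        hnot (i + 1) i (by omega) h2 h1 (by omega) (Or.inl (by omega))
      rw [hint (i + 1) (by omega) h2, he, ← hint i h1 (by omega)] at h4
      exact h4 h3
    by_contra hcon
    push_neg at hcon
    have hT1 : (Finset.Icc (i + 1) (i + d)).image σ ⊆ A i :=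
      Finset.image_subset_image (Finset.Icc_subset_Icc (by omega) le_rfl)
    have hT2 : (Finset.Icc (i + 1) (i + d)).image σ ⊆ A (i + 1) :=
      Finset.image_subset_image (Finset.Icc_subset_Icc le_rfl (by omega))
    have hTcard : ((Finset.Icc (i + 1) (i + d)).image σ).card = d := by
      have hsub : (↑(Finset.Icc (i + 1) (i + d)) : Set ℕ) ⊆ Set.Icc 1 (N + d) := by
        rw [Finset.coe_Icc]
        exact Set.Icc_subset_Icc (by omega) (by omega)
      rw [Finset.card_image_of_injOn (hσ.injOn.mono hsub), Nat.card_Icc]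
      omega
    rw [hint i h1 (by omega)] at hT1
    rw [hint (i + 1) (by omega) h2] at hT2
    have hsub2 : (Finset.Icc (i + 1) (i + d)).image σ ⊆
        Finset.Icc (max (a i) (a (i + 1))) (min (a i + d) (a (i + 1) + d)) := by
      intro x hx
      have h5 := hT1 hx
      have h6 := hT2 hx
      simp only [Finset.mem_Icc] at h5 h6 ⊢
      omega
    have := Finset.card_le_card hsub2
    rw [Nat.card_Icc] at this
    omega
  have hup : ∀ i, 1 ≤ i → i + 1 ≤ N → a (i + 1) = a i + 1 →
      σ i = a i ∧ σ (i + d + 1) = a i + d + 1 := by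
    intro i h1 h2 h3
    have hi1 : σ i ∈ A i := hmemA i i le_rfl (by omega)
    have hi2 : σ i ∉ A (i + 1) :=
      hnot (i + 1) i (by omega) h2 h1 (by omega) (Or.inl (by omega))
    have hj1 : σ (i + d + 1) ∈ A (i + 1) := hmemA (i + 1) (i + d + 1) (by omega) (by omega)
    have hj2 : σ (i + d + 1) ∉ A i :=
      hnot i (i + d + 1) h1 (by omega) (by omega) (by omega) (Or.inr (by omega))
    rw [hint i h1 (by omega)] at hi1 hj2
    rw [hint (i + 1) (by omega) h2] at hi2 hj1
    simp only [Finset.mem_Icc, not_and, not_le] at hi1 hi2 hj1 hj2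
    omega
  have hdown : ∀ i, 1 ≤ i → i + 1 ≤ N → a i = a (i + 1) + 1 →
      σ i = a i + d ∧ σ (i + d + 1) = a (i + 1) := by
    intro i h1 h2 h3
    have hi1 : σ i ∈ A i := hmemA i i le_rfl (by omega)
    have hi2 : σ i ∉ A (i + 1) :=
      hnot (i + 1) i (by omega) h2 h1 (by omega) (Or.inl (by omega))
    have hj1 : σ (i + d + 1) ∈ A (i + 1) := hmemA (i + 1) (i + d + 1) (by omega) (by omega)
    have hj2 : σ (i + d + 1) ∉ A i :=
      hnot i (i + d + 1) h1 (by omega) (by omega) (by omega) (Or.inr (by omega))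
    rw [hint i h1 (by omega)] at hi1 hj2
    rw [hint (i + 1) (by omega) h2] at hi2 hj1
    simp only [Finset.mem_Icc, not_and, not_le] at hi1 hi2 hj1 hj2
    omega
  rcases hstep 1 le_rfl (by omega) with hcase | hcase
  · -- increasing : identity
    left
    have hstepall : ∀ i, 1 ≤ i → i + 1 ≤ N → a (i + 1) = a i + 1 := by
      intro i
      induction i with
      | zero => omega
      | succ k ih =>
        intro h1 h2
        rcases Nat.eq_zero_or_pos k with rfl | hk
        · exact hcase
        · have hk1 := ih (by omega) (by omega)
          have hst : a (k + 2) = a (k + 1) + 1 ∨ a (k + 1) = a (k + 2) + 1 :=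
            hstep (k + 1) (by omega) h2
          rcases hst with h | h
          · exact h
          · exfalso
            have hσk := (hup k (by omega) (by omega) hk1).1
            have hmem2 : σ k ∈ A (k + 2) := by
              rw [hint (k + 2) (by omega) (by omega)]
              simp only [Finset.mem_Icc]
              omega
            exact hnot (k + 2) k (by omega) (by omega) (by omega) (by omega)
              (Or.inl (by omega)) hmem2
    have hlin : ∀ i, 1 ≤ i → i ≤ N → a i + 1 = a 1 + i := by
      intro i
      induction i with
      | zero => omega
      | succ k ih =>
        intro h1 h2
        rcases Nat.eq_zero_or_pos k with rfl | hk
        · rfl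
        · have h3 := ih (by omega) (by omega)
          have h4 : a (k + 1) = a k + 1 ∨ a k = a (k + 1) + 1 :=
            hstep k (by omega) (by omega)
          have h5 := hstepall k (by omega) (by omega)
          omega
    have hb1 := ha_lb 1 le_rfl (by omega)
    have hbN := ha_lb N (by omega) le_rfl
    have haN := hlin N (by omega) le_rfl
    have ha1 : a 1 = 1 := by omega
    have hid : ∀ k, 1 ≤ k → k ≤ N + d → (k < N ∨ k ≠ d + 1) → σ k = k := by
      intro k h1 h2 h3
      rcases Nat.lt_or_ge k N with hc | hc
      · have hs := hstepall k h1 (by omega)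
        have := (hup k h1 (by omega) hs).1
        have := hlin k h1 (by omega)
        omega
      · obtain ⟨j, rfl⟩ : ∃ j, k = j + d + 1 := ⟨k - d - 1, by omega⟩
        have hs := hstepall j (by omega) (by omega)
        have := (hup j (by omega) (by omega) hs).2
        have := hlin j (by omega) (by omega)
        omega
    intro i h1 h2
    by_cases hcov : i < N ∨ i ≠ d + 1
    · exact hid i h1 h2 hcov
    · push_neg at hcov
      obtain ⟨hge, rfl⟩ := hcov
      obtain ⟨k, hk, hk2⟩ := hσ.surjOn (⟨by omega, by omega⟩ : d + 1 ∈ Set.Icc 1 (N + d))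
      simp only [Set.mem_Icc] at hk
      rcases eq_or_ne k (d + 1) with rfl | hne2
      · exact hk2
      · exfalso
        have := hid k hk.1 hk.2 (Or.inr hne2)
        omega
  · -- decreasing : reversal
    right
    have hstepall : ∀ i, 1 ≤ i → i + 1 ≤ N → a i = a (i + 1) + 1 := by
      intro i
      induction i with
      | zero => omega
      | succ k ih =>
        intro h1 h2
        rcases Nat.eq_zero_or_pos k with rfl | hk
        · exact hcase
        · have hk1 := ih (by omega) (by omega)
          have hst : a (k + 2) = a (k + 1) + 1 ∨ a (k + 1) = a (k + 2) + 1 :=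
            hstep (k + 1) (by omega) h2
          rcases hst with h | h
          · exfalso
            have hσk := (hdown k (by omega) (by omega) hk1).1
            have hmem2 : σ k ∈ A (k + 2) := by
              rw [hint (k + 2) (by omega) (by omega)]
              simp only [Finset.mem_Icc]
              omega
            exact hnot (k + 2) k (by omega) (by omega) (by omega) (by omega)
              (Or.inl (by omega)) hmem2
          · exact h
    have hlin : ∀ i, 1 ≤ i → i ≤ N → a i + i = a 1 + 1 := by
      intro i
      induction i with
      | zero => omega
      | succ k ih =>
        intro h1 h2
        rcases Nat.eq_zero_or_pos k with rfl | hk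
        · rfl
        · have h3 := ih (by omega) (by omega)
          have h4 : a (k + 1) = a k + 1 ∨ a k = a (k + 1) + 1 :=
            hstep k (by omega) (by omega)
          have h5 := hstepall k (by omega) (by omega)
          omega
    have hb1 := ha_lb 1 le_rfl (by omega)
    have hbN := ha_lb N (by omega) le_rfl
    have haN := hlin N (by omega) le_rfl
    have ha1 : a 1 = N := by omega
    have hid : ∀ k, 1 ≤ k → k ≤ N + d → (k < N ∨ k ≠ d + 1) → σ k + k = N + d + 1 := by
      intro k h1 h2 h3
      rcases Nat.lt_or_ge k N with hc | hc
      · have hs := hstepall k h1 (by omega)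
        have := (hdown k h1 (by omega) hs).1
        have := hlin k h1 (by omega)
        omega
      · obtain ⟨j, rfl⟩ : ∃ j, k = j + d + 1 := ⟨k - d - 1, by omega⟩
        have hs := hstepall j (by omega) (by omega)
        have := (hdown j (by omega) (by omega) hs).2
        have := hlin (j + 1) (by omega) (by omega)
        omega
    intro i h1 h2
    by_cases hcov : i < N ∨ i ≠ d + 1
    · exact hid i h1 h2 hcov
    · push_neg at hcov
      obtain ⟨hge, rfl⟩ := hcov
      have hmid : d + 1 = N := by omega
      obtain ⟨k, hk, hk2⟩ := hσ.surjOn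
        (⟨by omega, by omega⟩ : N ∈ Set.Icc 1 (N + d))
      simp only [Set.mem_Icc] at hk
      rcases eq_or_ne k (d + 1) with rfl | hne2
      · omega
      · exfalso
        have := hid k hk.1 hk.2 (Or.inr hne2)
        omega

/-- Let `δ ≥ 1` and `n ≥ 2δ + 3`, and let `σ` be a permutation
(bijection onto itself) of `{1,…,n}` such that any two elements of `{1,…,n}` differing
by at most `δ + 1` are sent to values differing by at most `δ + 1`.  Then either
`σ(i) = i` for all `i ∈ {1,…,n}`, or `σ(i) = n + 1 − i` for all `i ∈ {1,…,n}`. -/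
theorem identity_or_reversal (δ n : ℕ) (hδ : 1 ≤ δ) (hn : 2 * δ + 3 ≤ n)
    (σ : ℕ → ℕ) (hσ : Set.BijOn σ (Set.Icc 1 n) (Set.Icc 1 n))
    (hyp : ∀ i ∈ Set.Icc 1 n, ∀ j ∈ Set.Icc 1 n,
      |(i : ℤ) - (j : ℤ)| ≤ (δ : ℤ) + 1 → |(σ i : ℤ) - (σ j : ℤ)| ≤ (δ : ℤ) + 1) :
    (∀ i ∈ Set.Icc 1 n, σ i = i) ∨ (∀ i ∈ Set.Icc 1 n, σ i = n + 1 - i) := by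
  obtain ⟨N, rfl⟩ : ∃ N, n = N + (δ + 1) := ⟨n - (δ + 1), by omega⟩
  have hN : (δ + 1) + 1 ≤ N := by omega
  have key : ∀ p q : ℕ, 1 ≤ p → q ≤ N + (δ + 1) → p ≤ q → q ≤ p + (δ + 1) →
      σ p ≤ σ q + (δ + 1) ∧ σ q ≤ σ p + (δ + 1) := by
    intro p q h1 h2 h3 h4
    have h5 := hyp p ⟨h1, by omega⟩ q ⟨by omega, h2⟩ (by rw [abs_le]; omega)
    rw [abs_le] at h5
    exact ⟨by omega, by omega⟩
  rcases aux_idrev (δ + 1) N (by omega) hN σ hσ key with h | h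
  · left
    intro i hi
    simp only [Set.mem_Icc] at hi
    exact h i hi.1 hi.2
  · right
    intro i hi
    simp only [Set.mem_Icc] at hi
    have := h i hi.1 hi.2
    omega
end

section
/- Let δ ≥ 1 and n ≥ 2δ + 3 be integers, let N and c be integers with c ≥ 0 and c + n ≤ N, and let π be a permutation of {1,…,N} such that for all i, j ∈ {c+1,…,c+n} with |i − j| ≤ δ + 1 one has |π(i) − π(j)| ≤ δ + 1. Then there exists an integer t with 0 ≤ t and t + n ≤ N such that either π(c + j) = t + j for all j ∈ {1,…,n}, or π(c + j) = t + n + 1 − j for all j ∈ {1,…,n}. -/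
/-- Let `δ ≥ 1` and `n ≥ 2δ + 3`, let `N` and `c` be integers with
`c ≥ 0` and `c + n ≤ N`, and let `π` be a permutation (bijection onto itself) of
`{1,…,N}` such that any two elements of the block `{c+1,…,c+n}` differing by at most
`δ + 1` are sent to values differing by at most `δ + 1`.  Then there is a `t` with
`0 ≤ t` and `t + n ≤ N` such that either `π(c + j) = t + j` for all `j ∈ {1,…,n}`, or
`π(c + j) = t + n + 1 − j` for all `j ∈ {1,…,n}`. -/
theorem block_rigidity (δ n N c : ℕ) (hδ : 1 ≤ δ) (hn : 2 * δ + 3 ≤ n)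
    (hc : c + n ≤ N)
    (π : ℕ → ℕ) (hπ : Set.BijOn π (Set.Icc 1 N) (Set.Icc 1 N))
    (hyp : ∀ i ∈ Set.Icc (c + 1) (c + n), ∀ j ∈ Set.Icc (c + 1) (c + n),
      |(i : ℤ) - (j : ℤ)| ≤ (δ : ℤ) + 1 → |(π i : ℤ) - (π j : ℤ)| ≤ (δ : ℤ) + 1) :
    ∃ t : ℕ, 0 ≤ t ∧ t + n ≤ N ∧
      ((∀ j ∈ Set.Icc 1 n, π (c + j) = t + j) ∨
       (∀ j ∈ Set.Icc 1 n, π (c + j) = t + n + 1 - j)) := by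
  have hmem : ∀ x, c + 1 ≤ x → x ≤ c + n → x ∈ Set.Icc 1 N := by
    intro x h1 h2; exact ⟨by omega, by omega⟩
  have hrange : ∀ x, c + 1 ≤ x → x ≤ c + n → 1 ≤ π x ∧ π x ≤ N := by
    intro x h1 h2
    have := hπ.mapsTo (hmem x h1 h2); exact ⟨this.1, this.2⟩
  have hinj : ∀ x y, c + 1 ≤ x → x ≤ c + n → c + 1 ≤ y → y ≤ c + n →
      π x = π y → x = y := by
    intro x y hx1 hx2 hy1 hy2 h
    exact hπ.injOn (hmem x hx1 hx2) (hmem y hy1 hy2) h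
  have hyp' : ∀ x y, c + 1 ≤ x → x ≤ c + n → c + 1 ≤ y → y ≤ c + n →
      x ≤ y → y ≤ x + (δ + 1) → π y ≤ π x + (δ + 1) ∧ π x ≤ π y + (δ + 1) := by
    intro x y hx1 hx2 hy1 hy2 hxy hxy'
    have h := hyp x ⟨hx1, hx2⟩ y ⟨hy1, hy2⟩ (by rw [abs_le]; push_cast; omega)
    rw [abs_le] at h; push_cast at h; omega
  -- images of windows of length δ+2 are intervals of length δ+2
  have L1 : ∀ i, ∃ a, c + 1 ≤ i → i + (δ + 1) ≤ c + n →
      1 ≤ a ∧ (Finset.Icc i (i + (δ + 1))).image π = Finset.Icc a (a + (δ + 1)) := by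
    intro i
    by_cases h1 : c + 1 ≤ i ∧ i + (δ + 1) ≤ c + n
    · obtain ⟨h1, h2⟩ := h1
      set S := (Finset.Icc i (i + (δ + 1))).image π with hS
      have hne : S.Nonempty :=
        ⟨π i, Finset.mem_image.2 ⟨i, Finset.mem_Icc.2 ⟨le_refl _, by omega⟩, rfl⟩⟩
      set a := S.min' hne with hadef
      have haS : a ∈ S := S.min'_mem hne
      have hbS : S.max' hne ∈ S := S.max'_mem hne
      obtain ⟨x, hx, hxa⟩ := Finset.mem_image.1 haS
      obtain ⟨y, hy, hyb⟩ := Finset.mem_image.1 hbS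
      rw [Finset.mem_Icc] at hx hy
      have key : ∀ u v, i ≤ u → u ≤ i + (δ + 1) → i ≤ v → v ≤ i + (δ + 1) →
          π v ≤ π u + (δ + 1) := by
        intro u v hu1 hu2 hv1 hv2
        rcases le_total u v with h | h
        · exact (hyp' u v (by omega) (by omega) (by omega) (by omega) h (by omega)).1
        · exact (hyp' v u (by omega) (by omega) (by omega) (by omega) h (by omega)).2
      have hb_le : S.max' hne ≤ a + (δ + 1) := by
        have := key x y hx.1 hx.2 hy.1 hy.2
        omega
      have hcardS : S.card = δ + 2 := by
        rw [hS, Finset.card_image_of_injOn, Nat.card_Icc]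
        · omega
        · intro u hu v hv huv
          simp only [Finset.coe_Icc, Set.mem_Icc] at hu hv
          exact hinj u v (by omega) (by omega) (by omega) (by omega) huv
      have hsub : S ⊆ Finset.Icc a (a + (δ + 1)) := by
        intro z hz
        rw [Finset.mem_Icc]
        exact ⟨S.min'_le z hz, le_trans (S.le_max' z hz) hb_le⟩
      have hEq : S = Finset.Icc a (a + (δ + 1)) :=
        Finset.eq_of_subset_of_card_le hsub (by rw [Nat.card_Icc]; omega)
      refine ⟨a, fun _ _ => ⟨?_, hEq⟩⟩
      have := (hrange x (by omega) (by omega)).1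
      omega
    · exact ⟨1, fun h2 h3 => absurd ⟨h2, h3⟩ h1⟩
  choose a ha using L1
  -- consecutive windows shift by exactly one
  have L2 : ∀ i, c + 1 ≤ i → i + (δ + 2) ≤ c + n →
      (a (i + 1) = a i + 1 ∧ π i = a i) ∨
      (a i = a (i + 1) + 1 ∧ π i = a i + (δ + 1)) := by
    intro i h1 h2
    obtain ⟨ha1, hF1⟩ := ha i h1 (by omega)
    obtain ⟨ha2, hF2⟩ := ha (i + 1) (by omega) (by omega)
    have hmid : ∀ x, i + 1 ≤ x → x ≤ i + (δ + 1) →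
        (a i ≤ π x ∧ π x ≤ a i + (δ + 1)) ∧
        (a (i + 1) ≤ π x ∧ π x ≤ a (i + 1) + (δ + 1)) := by
      intro x hx1 hx2
      constructor
      · have : π x ∈ Finset.Icc (a i) (a i + (δ + 1)) := by
          rw [← hF1]
          exact Finset.mem_image_of_mem π (Finset.mem_Icc.2 ⟨by omega, by omega⟩)
        rwa [Finset.mem_Icc] at this
      · have : π x ∈ Finset.Icc (a (i + 1)) (a (i + 1) + (δ + 1)) := by
          rw [← hF2]
          exact Finset.mem_image_of_mem π (Finset.mem_Icc.2 ⟨by omega, by omega⟩)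
        rwa [Finset.mem_Icc] at this
    have hC : ((Finset.Icc (i + 1) (i + (δ + 1))).image π).card = δ + 1 := by
      rw [Finset.card_image_of_injOn, Nat.card_Icc]
      · omega
      · intro u hu v hv huv
        simp only [Finset.coe_Icc, Set.mem_Icc] at hu hv
        exact hinj u v (by omega) (by omega) (by omega) (by omega) huv
    have hCsub : (Finset.Icc (i + 1) (i + (δ + 1))).image π ⊆
        Finset.Icc (max (a i) (a (i + 1)))
          (min (a i + (δ + 1)) (a (i + 1) + (δ + 1))) := by
      intro z hz
      obtain ⟨x, hx, rfl⟩ := Finset.mem_image.1 hz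
      rw [Finset.mem_Icc] at hx
      obtain ⟨m1, m2⟩ := hmid x hx.1 hx.2
      rw [Finset.mem_Icc]
      omega
    have hcard2 := Finset.card_le_card hCsub
    rw [hC, Nat.card_Icc] at hcard2
    have hne : a i ≠ a (i + 1) := by
      intro hEq
      have hm : π (i + (δ + 2)) ∈ Finset.Icc (a i) (a i + (δ + 1)) := by
        rw [hEq, ← hF2]
        exact Finset.mem_image_of_mem π (Finset.mem_Icc.2 ⟨by omega, by omega⟩)
      rw [← hF1] at hm
      obtain ⟨x, hx, hxe⟩ := Finset.mem_image.1 hm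
      rw [Finset.mem_Icc] at hx
      have := hinj x (i + (δ + 2)) (by omega) (by omega) (by omega) (by omega) hxe
      omega
    have hcase : a (i + 1) = a i + 1 ∨ a i = a (i + 1) + 1 := by omega
    have hπiF : a i ≤ π i ∧ π i ≤ a i + (δ + 1) := by
      have : π i ∈ Finset.Icc (a i) (a i + (δ + 1)) := by
        rw [← hF1]
        exact Finset.mem_image_of_mem π (Finset.mem_Icc.2 ⟨le_refl _, by omega⟩)
      rwa [Finset.mem_Icc] at this
    rcases hcase with hup | hdn
    · left; refine ⟨hup, ?_⟩
      by_contra hne2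
      have hm : π i ∈ Finset.Icc (a (i + 1)) (a (i + 1) + (δ + 1)) :=
        Finset.mem_Icc.2 (by omega)
      rw [← hF2] at hm
      obtain ⟨x, hx, hxe⟩ := Finset.mem_image.1 hm
      rw [Finset.mem_Icc] at hx
      have := hinj x i (by omega) (by omega) (by omega) (by omega) hxe
      omega
    · right; refine ⟨hdn, ?_⟩
      by_contra hne2
      have hm : π i ∈ Finset.Icc (a (i + 1)) (a (i + 1) + (δ + 1)) :=
        Finset.mem_Icc.2 (by omega)
      rw [← hF2] at hm
      obtain ⟨x, hx, hxe⟩ := Finset.mem_image.1 hm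
      rw [Finset.mem_Icc] at hx
      have := hinj x i (by omega) (by omega) (by omega) (by omega) hxe
      omega
  -- the shift direction is constant
  have L3 : ∀ i, c + 1 ≤ i → i + (δ + 3) ≤ c + n →
      (a (i + 1) = a i + 1 → a (i + 2) = a (i + 1) + 1) ∧
      (a i = a (i + 1) + 1 → a (i + 1) = a (i + 2) + 1) := by
    intro i h1 h2
    have s1 := L2 i h1 (by omega)
    have s2 := L2 (i + 1) (by omega) (by omega)
    have e : i + 1 + 1 = i + 2 := by omega
    rw [e] at s2
    have hd := hyp' i (i + 1) (by omega) (by omega) (by omega) (by omega)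
      (by omega) (by omega)
    rcases s1 with ⟨h1a, h1b⟩ | ⟨h1a, h1b⟩ <;>
      rcases s2 with ⟨h2a, h2b⟩ | ⟨h2a, h2b⟩ <;>
      exact ⟨fun h => by omega, fun h => by omega⟩
  have hb1 : c + 1 + (δ + 2) ≤ c + n := by omega
  rcases L2 (c + 1) (by omega) hb1 with ⟨base, _⟩ | ⟨base, _⟩
  · -- increasing case
    have sign : ∀ k, k + (δ + 3) ≤ n → a (c + 1 + k + 1) = a (c + 1 + k) + 1 := by
      intro k
      induction k with
      | zero => intro _; simpa using base
      | succ m ih =>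
        intro hk
        have h3 := (L3 (c + 1 + m) (by omega) (by omega)).1 (ih (by omega))
        have e1 : c + 1 + m + 2 = c + 1 + (m + 1) + 1 := by omega
        have e2 : c + 1 + m + 1 = c + 1 + (m + 1) := by omega
        rw [e1, e2] at h3
        exact h3
    have aform : ∀ k, k + (δ + 2) ≤ n → a (c + 1 + k) = a (c + 1) + k := by
      intro k
      induction k with
      | zero => intro _; simp
      | succ m ih =>
        intro hk
        have hs := sign m (by omega)
        have e : c + 1 + m + 1 = c + 1 + (m + 1) := by omega
        rw [e] at hs
        rw [hs, ih (by omega)]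
        omega
    have pform : ∀ j, 1 ≤ j → j ≤ n → π (c + j) + 1 = a (c + 1) + j := by
      intro j
      induction j using Nat.strong_induction_on with
      | _ j IH =>
        intro hj1 hj2
        by_cases hsm : j ≤ δ + 1
        · rcases L2 (c + j) (by omega) (by omega) with ⟨_, hv⟩ | ⟨hd, _⟩
          · have hA := aform (j - 1) (by omega)
            have e : c + 1 + (j - 1) = c + j := by omega
            rw [e] at hA
            omega
          · have hs2 := sign (j - 1) (by omega)
            have e : c + 1 + (j - 1) = c + j := by omega
            rw [e] at hs2
            omega
        · push_neg at hsm
          obtain ⟨_, hF⟩ := ha (c + j - (δ + 1)) (by omega) (by omega)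
          have haS := aform (j - (δ + 2)) (by omega)
          have e : c + 1 + (j - (δ + 2)) = c + j - (δ + 1) := by omega
          rw [e] at haS
          have hmemF : a (c + j - (δ + 1)) ≤ π (c + j) ∧
              π (c + j) ≤ a (c + j - (δ + 1)) + (δ + 1) := by
            have : π (c + j) ∈ Finset.Icc (a (c + j - (δ + 1)))
                (a (c + j - (δ + 1)) + (δ + 1)) := by
              rw [← hF]
              exact Finset.mem_image_of_mem π (Finset.mem_Icc.2 ⟨by omega, by omega⟩)
            rwa [Finset.mem_Icc] at this
          by_contra hne2
          have h1a := (ha (c + 1) (by omega) (by omega)).1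
          have hb' : j - (δ + 1) ≤ π (c + j) + 1 - a (c + 1) ∧
              π (c + j) + 1 - a (c + 1) ≤ j - 1 ∧
              a (c + 1) + (π (c + j) + 1 - a (c + 1)) = π (c + j) + 1 := by
            omega
          set j' := π (c + j) + 1 - a (c + 1) with hj'
          have hIH := IH j' (by omega) (by omega) (by omega)
          have heq : π (c + j') = π (c + j) := by omega
          have := hinj (c + j') (c + j) (by omega) (by omega) (by omega) (by omega) heq
          omega
    have h1a := (ha (c + 1) (by omega) (by omega)).1
    refine ⟨a (c + 1) - 1, Nat.zero_le _, ?_, Or.inl ?_⟩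
    · have hp := pform n (by omega) (le_refl n)
      have hr := (hrange (c + n) (by omega) (le_refl _)).2
      omega
    · intro j hj
      rw [Set.mem_Icc] at hj
      have := pform j hj.1 hj.2
      omega
  · -- decreasing case
    have sign : ∀ k, k + (δ + 3) ≤ n → a (c + 1 + k) = a (c + 1 + k + 1) + 1 := by
      intro k
      induction k with
      | zero => intro _; simpa using base
      | succ m ih =>
        intro hk
        have h3 := (L3 (c + 1 + m) (by omega) (by omega)).2 (ih (by omega))
        have e1 : c + 1 + m + 2 = c + 1 + (m + 1) + 1 := by omega
        have e2 : c + 1 + m + 1 = c + 1 + (m + 1) := by omega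
        rw [e1, e2] at h3
        exact h3
    have aform : ∀ k, k + (δ + 2) ≤ n → a (c + 1 + k) + k = a (c + 1) := by
      intro k
      induction k with
      | zero => intro _; simp
      | succ m ih =>
        intro hk
        have hs := sign m (by omega)
        have e : c + 1 + m + 1 = c + 1 + (m + 1) := by omega
        rw [e] at hs
        have := ih (by omega)
        omega
    have pform : ∀ j, 1 ≤ j → j ≤ n → π (c + j) + j = a (c + 1) + δ + 2 := by
      intro j
      induction j using Nat.strong_induction_on with
      | _ j IH =>
        intro hj1 hj2
        by_cases hsm : j ≤ δ + 1
        · rcases L2 (c + j) (by omega) (by omega) with ⟨hd, _⟩ | ⟨_, hv⟩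
          · have hs2 := sign (j - 1) (by omega)
            have e : c + 1 + (j - 1) = c + j := by omega
            rw [e] at hs2
            omega
          · have hA := aform (j - 1) (by omega)
            have e : c + 1 + (j - 1) = c + j := by omega
            rw [e] at hA
            omega
        · push_neg at hsm
          obtain ⟨_, hF⟩ := ha (c + j - (δ + 1)) (by omega) (by omega)
          have haS := aform (j - (δ + 2)) (by omega)
          have e : c + 1 + (j - (δ + 2)) = c + j - (δ + 1) := by omega
          rw [e] at haS
          have hmemF : a (c + j - (δ + 1)) ≤ π (c + j) ∧
              π (c + j) ≤ a (c + j - (δ + 1)) + (δ + 1) := by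
            have : π (c + j) ∈ Finset.Icc (a (c + j - (δ + 1)))
                (a (c + j - (δ + 1)) + (δ + 1)) := by
              rw [← hF]
              exact Finset.mem_image_of_mem π (Finset.mem_Icc.2 ⟨by omega, by omega⟩)
            rwa [Finset.mem_Icc] at this
          by_contra hne2
          have h1a := (ha (c + 1) (by omega) (by omega)).1
          have hb' : j - (δ + 1) ≤ a (c + 1) + δ + 2 - π (c + j) ∧
              a (c + 1) + δ + 2 - π (c + j) ≤ j - 1 ∧
              π (c + j) + (a (c + 1) + δ + 2 - π (c + j)) = a (c + 1) + δ + 2 := by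
            omega
          set j' := a (c + 1) + δ + 2 - π (c + j) with hj'
          have hIH := IH j' (by omega) (by omega) (by omega)
          have heq : π (c + j') = π (c + j) := by omega
          have := hinj (c + j') (c + j) (by omega) (by omega) (by omega) (by omega) heq
          omega
    have h1a := (ha (c + 1) (by omega) (by omega)).1
    refine ⟨a (c + 1) + δ + 1 - n, Nat.zero_le _, ?_, Or.inr ?_⟩
    · have hp1 := pform 1 (le_refl 1) (by omega)
      have hpn := pform n (by omega) (le_refl n)
      have hr := (hrange (c + 1) (le_refl _) (by omega)).2
      have hr2 := (hrange (c + n) (by omega) (le_refl _)).1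
      omega
    · intro j hj
      rw [Set.mem_Icc] at hj
      have := pform j hj.1 hj.2
      have hpn := pform n (by omega) (le_refl n)
      have hr2 := (hrange (c + n) (by omega) (le_refl _)).1
      omega
end

section
/- Let k ≥ 2, δ ≥ 1, and n ≥ 2δ + 3 be integers, let M be a binary matrix with columns indexed by {1,…,N} with N ≥ n, and let c ≥ 0 satisfy c + n ≤ N. Let M′ be the matrix obtained from M by adding, for every pair of columns i, j with c + 1 ≤ i < j ≤ c + n and j − i ≤ δ + 1, a new row whose entries equal 1 exactly in columns i and j. Then for every (k,δ)-consecutive ordering π of M′ there exists an integer t with 0 ≤ t and t + n ≤ N such that either π(c + j) = t + j for all j ∈ {1,…,n}, or π(c + j) = t + n + 1 − j for all j ∈ {1,…,n}. -/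
/-- A binary matrix with columns indexed by `{1,…,N}` is modelled as a set of rows,
each row being a function `ℕ → Bool` (only the values on columns `1,…,N` are relevant).

`numBlocks N w` is the number of blocks of ones of the row `w` on positions `1,…,N`:
a block is a maximal run of consecutive positions carrying a `1`, and we count
block starts (a position `p ∈ {1,…,N}` carrying a `1` such that `p = 1` or
position `p - 1` carries a `0`). -/
def numBlocks (N : ℕ) (w : ℕ → Bool) : ℕ :=
  ((Finset.Icc 1 N).filter (fun p => w p = true ∧ (p = 1 ∨ w (p - 1) = false))).card

/-- `GapsAtMost N δ w` holds when every gap of the row `w` (a maximal run of zeros lying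
between two blocks of ones, within positions `1,…,N`) has size at most `δ`: whenever
positions `p < q` both carry a `1` and all positions strictly between them carry `0`,
the run of zeros between them has length `q - p - 1 ≤ δ`, i.e. `q - p ≤ δ + 1`. -/
def GapsAtMost (N δ : ℕ) (w : ℕ → Bool) : Prop :=
  ∀ p q : ℕ, p ∈ Finset.Icc 1 N → q ∈ Finset.Icc 1 N → p < q →
    w p = true → w q = true → (∀ r : ℕ, p < r → r < q → w r = false) →
    q - p ≤ δ + 1

/-- `IsOrdering N k δ M π` : `π` is a `(k,δ)`-consecutive ordering of the matrix `M`
(with columns `{1,…,N}`): `π` is a permutation of the columns `{1,…,N}` (`π i` is the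
position of column `i` in the permuted matrix, so the entry at position `p` of row `v`
in the permuted matrix is `v (π.symm p)`), and in the permuted matrix every row has at
most `k` blocks and every gap has size at most `δ`. -/
def IsOrdering (N k δ : ℕ) (M : Set (ℕ → Bool)) (π : Equiv.Perm ℕ) : Prop :=
  Set.BijOn π (Set.Icc 1 N) (Set.Icc 1 N) ∧
  ∀ v ∈ M, numBlocks N (fun p => v (π.symm p)) ≤ k ∧
    GapsAtMost N δ (fun p => v (π.symm p))

/-- The rows added by the fixing gadget on the block of columns `{c+1,…,c+n}`:
for every pair of columns `i, j` with `c + 1 ≤ i < j ≤ c + n` and `j − i ≤ δ + 1`,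
a row whose entries equal `1` exactly in columns `i` and `j`. -/
def gadgetRows (c n δ : ℕ) : Set (ℕ → Bool) :=
  {v | ∃ i j : ℕ, c + 1 ≤ i ∧ i < j ∧ j ≤ c + n ∧ j - i ≤ δ + 1 ∧
        v = fun x => decide (x = i ∨ x = j)}


/-- Image of a length-(d+1) window of columns. -/
def winS (d : ℕ) (g : ℕ → ℕ) (j : ℕ) : Finset ℕ := (Finset.Icc j (j + d)).image g

/-- Minimum of the window image. -/
def winA (d : ℕ) (g : ℕ → ℕ) (j : ℕ) : ℕ :=
  (winS d g j).min' ((Finset.nonempty_Icc.2 (Nat.le_add_right j d)).image g)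

lemma winA_mem (d : ℕ) (g : ℕ → ℕ) (j : ℕ) : winA d g j ∈ winS d g j :=
  Finset.min'_mem _ _

lemma window_eq (d n : ℕ) (g : ℕ → ℕ)
    (ginj : ∀ i, 1 ≤ i → i ≤ n → ∀ j, 1 ≤ j → j ≤ n → g i = g j → i = j)
    (H : ∀ i j, 1 ≤ i → i ≤ j → j ≤ n → j - i ≤ d → g j ≤ g i + d ∧ g i ≤ g j + d)
    (j : ℕ) (hj : 1 ≤ j) (hjn : j + d ≤ n) :
    winS d g j = Finset.Icc (winA d g j) (winA d g j + d) := by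
  have hsub : winS d g j ⊆ Finset.Icc (winA d g j) (winA d g j + d) := by
    intro x hx
    obtain ⟨i0, hi0, hgi0⟩ := Finset.mem_image.1 (winA_mem d g j)
    obtain ⟨i, hi, rfl⟩ := Finset.mem_image.1 hx
    rw [Finset.mem_Icc] at hi hi0 ⊢
    refine ⟨Finset.min'_le _ _ hx, ?_⟩
    rcases le_total i i0 with h | h
    · have := H i i0 (by omega) h (by omega) (by omega)
      omega
    · have := H i0 i (by omega) h (by omega) (by omega)
      omega
  have hcard : (Finset.Icc (winA d g j) (winA d g j + d)).card ≤ (winS d g j).card := by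
    have h1 : (winS d g j).card = d + 1 := by
      rw [winS, Finset.card_image_of_injOn, Nat.card_Icc]
      · omega
      · intro x hx y hy hxy
        simp only [Finset.coe_Icc, Set.mem_Icc] at hx hy
        exact ginj x (by omega) (by omega) y (by omega) (by omega) hxy
    rw [h1, Nat.card_Icc]
    omega
  exact Finset.eq_of_subset_of_card_le hsub hcard

lemma step_lemma (d n : ℕ) (hd : 1 ≤ d) (g : ℕ → ℕ)
    (ginj : ∀ i, 1 ≤ i → i ≤ n → ∀ j, 1 ≤ j → j ≤ n → g i = g j → i = j)
    (H : ∀ i j, 1 ≤ i → i ≤ j → j ≤ n → j - i ≤ d → g j ≤ g i + d ∧ g i ≤ g j + d)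
    (j : ℕ) (hj : 1 ≤ j) (hjn : j + d + 1 ≤ n) :
    (winA d g (j+1) = winA d g j + 1 ∧ g j = winA d g j ∧ g (j+d+1) = winA d g j + d + 1) ∨
    (winA d g j = winA d g (j+1) + 1 ∧ g j = winA d g j + d ∧ g (j+d+1) = winA d g (j+1)) := by
  set a := winA d g j with ha
  set b := winA d g (j+1) with hb
  have hSj : winS d g j = Finset.Icc a (a + d) := window_eq d n g ginj H j hj (by omega)
  have hSj1 : winS d g (j+1) = Finset.Icc b (b + d) :=
    window_eq d n g ginj H (j+1) (by omega) (by omega)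
  have hgj_in : g j ∈ Finset.Icc a (a + d) := by
    rw [← hSj]
    exact Finset.mem_image_of_mem g (Finset.mem_Icc.2 ⟨le_rfl, by omega⟩)
  have hgj_out : g j ∉ Finset.Icc b (b + d) := by
    rw [← hSj1]
    intro hmem
    obtain ⟨i, hi, hgi⟩ := Finset.mem_image.1 hmem
    rw [Finset.mem_Icc] at hi
    have := ginj i (by omega) (by omega) j (by omega) (by omega) hgi
    omega
  have hgj1_in : g (j+d+1) ∈ Finset.Icc b (b + d) := by
    rw [← hSj1]
    exact Finset.mem_image_of_mem g (Finset.mem_Icc.2 ⟨by omega, by omega⟩)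
  have hgj1_out : g (j+d+1) ∉ Finset.Icc a (a + d) := by
    rw [← hSj]
    intro hmem
    obtain ⟨i, hi, hgi⟩ := Finset.mem_image.1 hmem
    rw [Finset.mem_Icc] at hi
    have := ginj i (by omega) (by omega) (j+d+1) (by omega) (by omega) hgi
    omega
  have hcom : (Finset.Icc (j+1) (j+d)).image g ⊆ Finset.Icc (max a b) (min (a+d) (b+d)) := by
    intro x hx
    have h1 : x ∈ Finset.Icc a (a+d) := by
      rw [← hSj]
      exact Finset.image_subset_image (Finset.Icc_subset_Icc (by omega) (by omega)) hx
    have h2 : x ∈ Finset.Icc b (b+d) := by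
      rw [← hSj1]
      exact Finset.image_subset_image (Finset.Icc_subset_Icc (by omega) (by omega)) hx
    rw [Finset.mem_Icc] at h1 h2 ⊢
    omega
  have hcardC : d ≤ ((Finset.Icc (j+1) (j+d)).image g).card := by
    rw [Finset.card_image_of_injOn, Nat.card_Icc]
    · omega
    · intro x hx y hy hxy
      simp only [Finset.coe_Icc, Set.mem_Icc] at hx hy
      exact ginj x (by omega) (by omega) y (by omega) (by omega) hxy
  have hle : d ≤ (Finset.Icc (max a b) (min (a+d) (b+d))).card :=
    le_trans hcardC (Finset.card_le_card hcom)
  rw [Nat.card_Icc] at hle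
  rw [Finset.mem_Icc] at hgj_in hgj1_in hgj_out hgj1_out
  omega

lemma key_lemma (N d n : ℕ) (hd : 2 ≤ d) (hn : 2 * d + 1 ≤ n) (g : ℕ → ℕ)
    (ginj : ∀ i, 1 ≤ i → i ≤ n → ∀ j, 1 ≤ j → j ≤ n → g i = g j → i = j)
    (gmem : ∀ i, 1 ≤ i → i ≤ n → 1 ≤ g i ∧ g i ≤ N)
    (H : ∀ i j, 1 ≤ i → i ≤ j → j ≤ n → j - i ≤ d → g j ≤ g i + d ∧ g i ≤ g j + d) :
    ∃ t, t + n ≤ N ∧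
      ((∀ j, 1 ≤ j → j ≤ n → g j = t + j) ∨ (∀ j, 1 ≤ j → j ≤ n → g j + j = t + n + 1)) := by
  have ha1 : 1 ≤ winA d g 1 := by
    obtain ⟨i0, hi0, hgi0⟩ := Finset.mem_image.1 (winA_mem d g 1)
    rw [Finset.mem_Icc] at hi0
    have := gmem i0 (by omega) (by omega)
    omega
  have hd1 : g (d+1) ∈ Finset.Icc (winA d g 1) (winA d g 1 + d) := by
    rw [← window_eq d n g ginj H 1 le_rfl (by omega)]
    exact Finset.mem_image_of_mem g (Finset.mem_Icc.2 ⟨by omega, by omega⟩)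
  rw [Finset.mem_Icc] at hd1
  rcases step_lemma d n (by omega) g ginj H 1 le_rfl (by omega) with up | down
  · -- increasing case
    have P : ∀ j, 1 ≤ j → j + d + 1 ≤ n →
        winA d g (j+1) = winA d g j + 1 ∧ g j = winA d g j ∧ g (j+d+1) = winA d g j + d + 1 := by
      intro j
      induction j with
      | zero => omega
      | succ m ih =>
        intro _ hjn
        by_cases hm : m = 0
        · subst hm; exact up
        · have ihm := ih (by omega) (by omega)
          rcases step_lemma d n (by omega) g ginj H (m+1) (by omega) (by omega) with h | h
          · exact h
          · exfalso
            have heq : g (m+1) = g (m+d+1) := by omega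
            have := ginj (m+1) (by omega) (by omega) (m+d+1) (by omega) (by omega) heq
            omega
    have A : ∀ m, m + d + 2 ≤ n → winA d g (m+1) = winA d g 1 + m := by
      intro m
      induction m with
      | zero => intro _; rfl
      | succ m ih =>
        intro h
        have h1 := P (m+1) (by omega) (by omega)
        have h2 := ih (by omega)
        omega
    have F1 : ∀ j, 1 ≤ j → j ≤ n → j ≠ d + 1 → g j + 1 = winA d g 1 + j := by
      intro j hj hjn hne
      by_cases hcase : j + d + 1 ≤ n
      · have h1 := P j hj hcase
        have h2 := A (j-1) (by omega)
        rw [show j - 1 + 1 = j by omega] at h2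
        omega
      · have hj2 : d + 2 ≤ j := by omega
        have h1 := P (j - d - 1) (by omega) (by omega)
        have h2 := A (j - d - 2) (by omega)
        rw [show j - d - 2 + 1 = j - d - 1 by omega] at h2
        rw [show j - d - 1 + d + 1 = j by omega] at h1
        omega
    have F : ∀ j, 1 ≤ j → j ≤ n → g j + 1 = winA d g 1 + j := by
      intro j hj hjn
      by_cases hne : j = d + 1
      · subst hne
        by_contra hcon
        have hr : g (d+1) - winA d g 1 < d := by omega
        have hF := F1 (g (d+1) - winA d g 1 + 1) (by omega) (by omega) (by omega)
        have heq : g (g (d+1) - winA d g 1 + 1) = g (d+1) := by omega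
        have := ginj _ (by omega) (by omega) (d+1) (by omega) (by omega) heq
        omega
      · exact F1 j hj hjn hne
    refine ⟨winA d g 1 - 1, ?_, Or.inl ?_⟩
    · have h1 := F n (by omega) le_rfl
      have h2 := gmem n (by omega) le_rfl
      omega
    · intro j hj hjn
      have := F j hj hjn
      omega
  · -- decreasing case
    have P : ∀ j, 1 ≤ j → j + d + 1 ≤ n →
        winA d g j = winA d g (j+1) + 1 ∧ g j = winA d g j + d ∧ g (j+d+1) = winA d g (j+1) := by
      intro j
      induction j with
      | zero => omega
      | succ m ih =>
        intro _ hjn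
        by_cases hm : m = 0
        · subst hm; exact down
        · have ihm := ih (by omega) (by omega)
          rcases step_lemma d n (by omega) g ginj H (m+1) (by omega) (by omega) with h | h
          · exfalso
            have heq : g (m+1) = g (m+d+1) := by omega
            have := ginj (m+1) (by omega) (by omega) (m+d+1) (by omega) (by omega) heq
            omega
          · exact h
    have A : ∀ m, m + d + 2 ≤ n → winA d g (m+1) + m = winA d g 1 := by
      intro m
      induction m with
      | zero => intro _; rfl
      | succ m ih =>
        intro h
        have h1 := P (m+1) (by omega) (by omega)
        have h2 := ih (by omega)
        omega
    have F1 : ∀ j, 1 ≤ j → j ≤ n → j ≠ d + 1 → g j + j = winA d g 1 + d + 1 := by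
      intro j hj hjn hne
      by_cases hcase : j + d + 1 ≤ n
      · have h1 := P j hj hcase
        have h2 := A (j-1) (by omega)
        rw [show j - 1 + 1 = j by omega] at h2
        omega
      · have hj2 : d + 2 ≤ j := by omega
        have h1 := P (j - d - 1) (by omega) (by omega)
        have h2 := A (j - d - 2) (by omega)
        rw [show j - d - 2 + 1 = j - d - 1 by omega] at h2
        rw [show j - d - 1 + d + 1 = j by omega] at h1
        omega
    have F : ∀ j, 1 ≤ j → j ≤ n → g j + j = winA d g 1 + d + 1 := by
      intro j hj hjn
      by_cases hne : j = d + 1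
      · subst hne
        by_contra hcon
        have hr1 : 1 ≤ g (d+1) - winA d g 1 := by omega
        have hF := F1 (d + 1 - (g (d+1) - winA d g 1)) (by omega) (by omega) (by omega)
        have heq : g (d + 1 - (g (d+1) - winA d g 1)) = g (d+1) := by omega
        have := ginj _ (by omega) (by omega) (d+1) (by omega) (by omega) heq
        omega
      · exact F1 j hj hjn hne
    have hgn := F n (by omega) le_rfl
    have hgnN := gmem n (by omega) le_rfl
    have hg1 := F 1 le_rfl (by omega)
    have hg1N := gmem 1 le_rfl (by omega)
    refine ⟨winA d g 1 + d - n, ?_, Or.inr ?_⟩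
    · omega
    · intro j hj hjn
      have := F j hj hjn
      omega

lemma gadget_bound (N k δ n c : ℕ) (M : Set (ℕ → Bool)) (π : Equiv.Perm ℕ)
    (hc : c + n ≤ N)
    (hord : IsOrdering N k δ (M ∪ gadgetRows c n δ) π)
    (i j : ℕ) (hi : c + 1 ≤ i) (hij : i < j) (hj : j ≤ c + n) (hdist : j - i ≤ δ + 1) :
    π j ≤ π i + (δ + 1) ∧ π i ≤ π j + (δ + 1) := by
  obtain ⟨hbij, hrows⟩ := hord
  have hv : (fun x => decide (x = i ∨ x = j)) ∈ M ∪ gadgetRows c n δ :=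
    Or.inr ⟨i, j, hi, hij, hj, hdist, rfl⟩
  have hgap := (hrows _ hv).2
  have hπi : π i ∈ Set.Icc 1 N := hbij.mapsTo ⟨by omega, by omega⟩
  have hπj : π j ∈ Set.Icc 1 N := hbij.mapsTo ⟨by omega, by omega⟩
  obtain ⟨hπi1, hπi2⟩ := hπi
  obtain ⟨hπj1, hπj2⟩ := hπj
  have hne : π i ≠ π j := fun h => by have := π.injective h; omega
  have hwt : ∀ p : ℕ, (decide (π.symm p = i ∨ π.symm p = j)) = true ↔ (p = π i ∨ p = π j) := by
    intro p
    rw [decide_eq_true_iff]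
    constructor
    · rintro (h | h)
      · exact Or.inl ((Equiv.symm_apply_eq π).1 h)
      · exact Or.inr ((Equiv.symm_apply_eq π).1 h)
    · rintro (h | h)
      · exact Or.inl ((Equiv.symm_apply_eq π).2 h)
      · exact Or.inr ((Equiv.symm_apply_eq π).2 h)
  rcases Nat.lt_or_ge (π i) (π j) with hlt | hge
  · have := hgap (π i) (π j) (Finset.mem_Icc.2 ⟨hπi1, hπi2⟩) (Finset.mem_Icc.2 ⟨hπj1, hπj2⟩)
      hlt ((hwt _).2 (Or.inl rfl)) ((hwt _).2 (Or.inr rfl))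
      (fun r h1 h2 => by
        simp only [decide_eq_false_iff_not, not_or]
        constructor
        · intro h; have := (Equiv.symm_apply_eq π).1 h; omega
        · intro h; have := (Equiv.symm_apply_eq π).1 h; omega)
    omega
  · have hlt : π j < π i := by omega
    have := hgap (π j) (π i) (Finset.mem_Icc.2 ⟨hπj1, hπj2⟩) (Finset.mem_Icc.2 ⟨hπi1, hπi2⟩)
      hlt ((hwt _).2 (Or.inr rfl)) ((hwt _).2 (Or.inl rfl))
      (fun r h1 h2 => by
        simp only [decide_eq_false_iff_not, not_or]
        constructor
        · intro h; have := (Equiv.symm_apply_eq π).1 h; omega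
        · intro h; have := (Equiv.symm_apply_eq π).1 h; omega)
    omega

/-- Let `k ≥ 2`, `δ ≥ 1`, and `n ≥ 2δ + 3`, let `M` be a binary matrix
with columns indexed by `{1,…,N}` with `N ≥ n`, and let `c ≥ 0` satisfy `c + n ≤ N`.
Let `M′ = M ∪ gadgetRows c n δ` be the matrix obtained from `M` by adding, for every
pair of columns `i, j` with `c + 1 ≤ i < j ≤ c + n` and `j − i ≤ δ + 1`, a new row whose
entries equal `1` exactly in columns `i` and `j`.  Then for every `(k,δ)`-consecutive
ordering `π` of `M′` there exists `t` with `0 ≤ t` and `t + n ≤ N` such that either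
`π(c + j) = t + j` for all `j ∈ {1,…,n}`, or `π(c + j) = t + n + 1 − j` for all
`j ∈ {1,…,n}`. -/
theorem gadget_forces_block (N k δ n c : ℕ) (hk : 2 ≤ k) (hδ : 1 ≤ δ)
    (hn : 2 * δ + 3 ≤ n) (hN : n ≤ N) (hc : c + n ≤ N)
    (M : Set (ℕ → Bool)) (π : Equiv.Perm ℕ)
    (hord : IsOrdering N k δ (M ∪ gadgetRows c n δ) π) :
    ∃ t : ℕ, 0 ≤ t ∧ t + n ≤ N ∧
      ((∀ j ∈ Set.Icc 1 n, π (c + j) = t + j) ∨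
       (∀ j ∈ Set.Icc 1 n, π (c + j) = t + n + 1 - j)) := by
  have hbij := hord.1
  have ginj : ∀ i, 1 ≤ i → i ≤ n → ∀ j, 1 ≤ j → j ≤ n →
      (fun j => π (c + j)) i = (fun j => π (c + j)) j → i = j := by
    intro i _ _ j _ _ h
    have := π.injective h
    omega
  have gmem : ∀ i, 1 ≤ i → i ≤ n → 1 ≤ (fun j => π (c + j)) i ∧ (fun j => π (c + j)) i ≤ N := by
    intro i h1 h2
    exact hbij.mapsTo ⟨by omega, by omega⟩
  have H : ∀ i j, 1 ≤ i → i ≤ j → j ≤ n → j - i ≤ δ + 1 →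
      (fun j => π (c + j)) j ≤ (fun j => π (c + j)) i + (δ + 1) ∧
      (fun j => π (c + j)) i ≤ (fun j => π (c + j)) j + (δ + 1) := by
    intro i j h1 h2 h3 h4
    rcases Nat.eq_or_lt_of_le h2 with rfl | hlt
    · simp
    · exact gadget_bound N k δ n c M π hc hord (c + i) (c + j) (by omega) (by omega)
        (by omega) (by omega)
  obtain ⟨t, ht, hcase⟩ := key_lemma N (δ + 1) n (by omega) (by omega)
    (fun j => π (c + j)) ginj gmem H
  refine ⟨t, Nat.zero_le t, ht, ?_⟩
  rcases hcase with h | h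
  · exact Or.inl (fun j hj => h j hj.1 hj.2)
  · refine Or.inr (fun j hj => ?_)
    have := h j hj.1 hj.2
    omega
end

section
/- Let k ≥ 2, δ ≥ 1, and n ≥ 2 be integers, let M be a binary matrix with columns indexed by {1,…,N} with N ≥ n, and let c ≥ 0 satisfy c + n ≤ N. Let M′ be the matrix obtained from M by adding, for every pair of columns i, j with c + 1 ≤ i < j ≤ c + n and j − i ≤ δ + 1, a new row whose entries equal 1 exactly in columns i and j. Suppose π is a (k,δ)-consecutive ordering of M and there exists an integer t with 0 ≤ t and t + n ≤ N such that either π(c + j) = t + j for all j ∈ {1,…,n}, or π(c + j) = t + n + 1 − j for all j ∈ {1,…,n}. Then π is a (k,δ)-consecutive ordering of M′. -/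
/-- Let `k ≥ 2`, `δ ≥ 1`, and `n ≥ 2`, let `M` be a binary matrix with
columns indexed by `{1,…,N}` with `N ≥ n`, and let `c ≥ 0` satisfy `c + n ≤ N`.
Let `M′ = M ∪ gadgetRows c n δ` be the matrix obtained from `M` by adding, for every
pair of columns `i, j` with `c + 1 ≤ i < j ≤ c + n` and `j − i ≤ δ + 1`, a new row whose
entries equal `1` exactly in columns `i` and `j`.  Suppose `π` is a `(k,δ)`-consecutive
ordering of `M` and there exists `t` with `0 ≤ t` and `t + n ≤ N` such that either
`π(c + j) = t + j` for all `j ∈ {1,…,n}`, or `π(c + j) = t + n + 1 − j` for all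
`j ∈ {1,…,n}`.  Then `π` is a `(k,δ)`-consecutive ordering of `M′`. -/
theorem gadget_satisfied_by_block (N k δ n c : ℕ) (hk : 2 ≤ k) (hδ : 1 ≤ δ)
    (hn : 2 ≤ n) (hN : n ≤ N) (hc : c + n ≤ N)
    (M : Set (ℕ → Bool)) (π : Equiv.Perm ℕ)
    (hord : IsOrdering N k δ M π)
    (hblock : ∃ t : ℕ, 0 ≤ t ∧ t + n ≤ N ∧
      ((∀ j ∈ Set.Icc 1 n, π (c + j) = t + j) ∨
       (∀ j ∈ Set.Icc 1 n, π (c + j) = t + n + 1 - j))) :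
    IsOrdering N k δ (M ∪ gadgetRows c n δ) π := by
  obtain ⟨hbij, hM⟩ := hord
  obtain ⟨t, -, htn, hcase⟩ := hblock
  refine ⟨hbij, ?_⟩
  rintro v (hv | hv)
  · exact hM v hv
  obtain ⟨i, j, hi, hij, hj, hd, rfl⟩ := hv
  have hwtrue : ∀ p : ℕ, (decide (π.symm p = i ∨ π.symm p = j) = true) ↔
      (p = π i ∨ p = π j) := by
    intro p
    simp [Equiv.symm_apply_eq]
  constructor
  · -- number of blocks ≤ k
    have hsub : ((Finset.Icc 1 N).filter
        (fun p => (fun x => decide (x = i ∨ x = j)) (π.symm p) = true ∧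
          (p = 1 ∨ (fun x => decide (x = i ∨ x = j)) (π.symm (p - 1)) = false))) ⊆
        ({π i, π j} : Finset ℕ) := by
      intro p hp
      simp only [Finset.mem_filter] at hp
      have := (hwtrue p).1 hp.2.1
      simp only [Finset.mem_insert, Finset.mem_singleton]
      exact this
    calc numBlocks N (fun p => (fun x => decide (x = i ∨ x = j)) (π.symm p))
        ≤ ({π i, π j} : Finset ℕ).card := Finset.card_le_card hsub
      _ ≤ 2 := Finset.card_insert_le _ _ |>.trans (by simp)
      _ ≤ k := hk
  · -- gaps at most δ
    intro p q _ _ hpq hwp hwq _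
    have hp' : p = π i ∨ p = π j := (hwtrue p).1 hwp
    have hq' : q = π i ∨ q = π j := (hwtrue q).1 hwq
    rcases hcase with h | h
    · have e1 := h (i - c) ⟨by omega, by omega⟩
      have e2 := h (j - c) ⟨by omega, by omega⟩
      rw [show c + (i - c) = i by omega] at e1
      rw [show c + (j - c) = j by omega] at e2
      omega
    · have e1 := h (i - c) ⟨by omega, by omega⟩
      have e2 := h (j - c) ⟨by omega, by omega⟩
      rw [show c + (i - c) = i by omega] at e1
      rw [show c + (j - c) = j by omega] at e2
      omega
end

section
/- Let δ ≥ 1 be an integer and let M be a binary matrix with columns indexed by {1,…,N} in which every row has exactly two entries equal to 1. Then M has the (2,δ)-C1P if and only if the simple graph G on vertex set {1,…,N}, which has an edge {a, b} whenever some row of M has its two 1-entries in columns a and b, has bandwidth at most δ + 1, i.e., there exists a bijection f : {1,…,N} → {1,…,N} such that |f(a) − f(b)| ≤ δ + 1 for every edge {a, b} of G. -/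
section Aux

/-- The inverse permutation also maps `s` into `s` when `π` is `BijOn s s`. -/
private lemma symm_mem_aux {s : Set ℕ} (π : Equiv.Perm ℕ) (hπ : Set.BijOn π s s)
    {p : ℕ} (hp : p ∈ s) : π.symm p ∈ s := by
  obtain ⟨x, hx, hxp⟩ := hπ.surjOn hp
  rw [← hxp, Equiv.symm_apply_apply]
  exact hx

/-- Characterization of the permuted row. -/
private lemma row_char_aux (N : ℕ) (π : Equiv.Perm ℕ)
    (hπ : Set.BijOn π (Set.Icc 1 N) (Set.Icc 1 N)) (v : ℕ → Bool) (a b : ℕ)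
    (hchar : ∀ i ∈ Set.Icc 1 N, (v i = true ↔ i = a ∨ i = b)) :
    ∀ p ∈ Set.Icc 1 N, ((v (π.symm p) = true) ↔ p = π a ∨ p = π b) := by
  intro p hp
  have hs : π.symm p ∈ Set.Icc 1 N := symm_mem_aux π hπ hp
  rw [hchar _ hs, Equiv.symm_apply_eq, Equiv.symm_apply_eq]

private lemma numBlocks_le_two_aux (N A B : ℕ) (w : ℕ → Bool)
    (hchar : ∀ p ∈ Set.Icc 1 N, (w p = true ↔ p = A ∨ p = B)) :
    numBlocks N w ≤ 2 := by
  unfold numBlocks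
  calc _ ≤ ({A, B} : Finset ℕ).card := by
        apply Finset.card_le_card
        intro p hp
        simp only [Finset.mem_filter, Finset.mem_Icc] at hp
        have := (hchar p (by simp [hp.1.1, hp.1.2])).mp hp.2.1
        simpa using this
    _ ≤ 2 := by
        apply le_trans (Finset.card_insert_le _ _)
        simp

private lemma gaps_of_two_aux (N δ A B : ℕ) (hAB : A ≠ B)
    (hint : |(A : ℤ) - (B : ℤ)| ≤ (δ : ℤ) + 1) (w : ℕ → Bool)
    (hchar : ∀ p ∈ Set.Icc 1 N, (w p = true ↔ p = A ∨ p = B)) :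
    GapsAtMost N δ w := by
  intro p q hp hq hpq hwp hwq _
  rw [Finset.mem_Icc] at hp hq
  have h1 := (hchar p (by simp [hp.1, hp.2])).mp hwp
  have h2 := (hchar q (by simp [hq.1, hq.2])).mp hwq
  have habs := abs_le.mp hint
  rcases h1 with rfl | rfl <;> rcases h2 with rfl | rfl <;> omega

private lemma gaps_to_bound_aux (N δ A B : ℕ) (hA : A ∈ Set.Icc 1 N) (hB : B ∈ Set.Icc 1 N)
    (w : ℕ → Bool)
    (hchar : ∀ p ∈ Set.Icc 1 N, (w p = true ↔ p = A ∨ p = B))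
    (hg : GapsAtMost N δ w) :
    |(A : ℤ) - (B : ℤ)| ≤ (δ : ℤ) + 1 := by
  simp only [Set.mem_Icc] at hA hB
  have key : ∀ P Q : ℕ, P < Q → 1 ≤ P → Q ≤ N →
      (∀ p, 1 ≤ p → p ≤ N → (w p = true ↔ p = P ∨ p = Q)) → Q - P ≤ δ + 1 := by
    intro P Q hPQ hP hQ hc
    apply hg P Q (by simp; omega) (by simp; omega) hPQ
      ((hc P hP (by omega)).mpr (Or.inl rfl)) ((hc Q (by omega) hQ).mpr (Or.inr rfl))
    intro r hr1 hr2
    have hr : 1 ≤ r ∧ r ≤ N := by omega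
    by_contra h
    have : w r = true := by
      revert h; cases w r <;> simp
    rcases (hc r hr.1 hr.2).mp this with rfl | rfl <;> omega
  have hchar' : ∀ p, 1 ≤ p → p ≤ N → (w p = true ↔ p = A ∨ p = B) := by
    intro p h1 h2; exact hchar p (by simp [h1, h2])
  rcases lt_trichotomy A B with h | h | h
  · have := key A B h (by omega) (by omega) hchar'
    rw [abs_le]
    constructor <;> omega
  · simp [h]; positivity
  · have := key B A h (by omega) (by omega) (by intro p h1 h2; rw [hchar' p h1 h2]; tauto)
    rw [abs_le]
    constructor <;> omega

end Aux

/-- Let `δ ≥ 1` and let `M` be a binary matrix with columns indexed by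
`{1,…,N}` in which every row has exactly two entries equal to `1`.  Then `M` has the
`(2,δ)`-C1P (some permutation of its columns is a `(2,δ)`-consecutive ordering of `M`)
if and only if the simple graph on vertex set `{1,…,N}` having an edge `{a, b}` whenever
some row of `M` has its two `1`-entries in columns `a` and `b` has bandwidth at most
`δ + 1`, i.e. there is a bijection `f` of `{1,…,N}` onto itself with
`|f a − f b| ≤ δ + 1` for every edge `{a, b}`. -/
theorem two_ones_C1P_iff_bandwidth (N δ : ℕ) (hδ : 1 ≤ δ)
    (M : Set (ℕ → Bool))
    (hrows : ∀ v ∈ M, ∃ a b : ℕ, a ∈ Set.Icc 1 N ∧ b ∈ Set.Icc 1 N ∧ a ≠ b ∧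
      ∀ i ∈ Set.Icc 1 N, (v i = true ↔ i = a ∨ i = b)) :
    (∃ π : Equiv.Perm ℕ, IsOrdering N 2 δ M π) ↔
    (∃ f : ℕ → ℕ, Set.BijOn f (Set.Icc 1 N) (Set.Icc 1 N) ∧
      ∀ a b : ℕ, a ≠ b →
        (∃ v ∈ M, ∀ i ∈ Set.Icc 1 N, (v i = true ↔ i = a ∨ i = b)) →
        |(f a : ℤ) - (f b : ℤ)| ≤ (δ : ℤ) + 1) := by
  constructor
  · rintro ⟨π, hbij, hrowsπ⟩
    refine ⟨fun x => π x, hbij, ?_⟩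
    rintro a b hab ⟨v, hv, hchar⟩
    obtain ⟨a', b', ha', hb', hne', hchar'⟩ := hrows v hv
    have ha'' : a' = a ∨ a' = b := (hchar a' ha').mp ((hchar' a' ha').mpr (Or.inl rfl))
    have hb'' : b' = a ∨ b' = b := (hchar b' hb').mp ((hchar' b' hb').mpr (Or.inr rfl))
    have key : |((π a' : ℕ) : ℤ) - ((π b' : ℕ) : ℤ)| ≤ (δ : ℤ) + 1 :=
      gaps_to_bound_aux N δ (π a') (π b') (hbij.mapsTo ha') (hbij.mapsTo hb')
        (fun p => v (π.symm p)) (row_char_aux N π hbij v a' b' hchar')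
        (hrowsπ v hv).2
    have hset : (a = a' ∧ b = b') ∨ (a = b' ∧ b = a') := by omega
    rcases hset with ⟨h1, h2⟩ | ⟨h1, h2⟩
    · rw [h1, h2]; exact key
    · rw [h1, h2, abs_sub_comm]; exact key
  · rintro ⟨f, hf, hband⟩
    letI : DecidablePred (· ∈ Set.Icc (1 : ℕ) N) := Classical.decPred _
    set π : Equiv.Perm ℕ := Equiv.Perm.subtypeCongr (hf.equiv f) (Equiv.refl _) with hπdef
    have hπf : ∀ x ∈ Set.Icc 1 N, π x = f x := by
      intro x hx
      rw [hπdef, Equiv.Perm.subtypeCongr.left_apply _ _ hx]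
      simp [Set.BijOn.equiv]
    have hπbij : Set.BijOn π (Set.Icc 1 N) (Set.Icc 1 N) :=
      hf.congr (fun x hx => (hπf x hx).symm)
    refine ⟨π, hπbij, ?_⟩
    intro v hv
    obtain ⟨a, b, ha, hb, hab, hchar⟩ := hrows v hv
    have hrc := row_char_aux N π hπbij v a b hchar
    refine ⟨numBlocks_le_two_aux N (π a) (π b) _ hrc, ?_⟩
    apply gaps_of_two_aux N δ (π a) (π b) (fun h => hab (π.injective h)) ?_ _ hrc
    rw [hπf a ha, hπf b hb]
    exact hband a b hab ⟨v, hv, hchar⟩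
end
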